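/- arXiv:2105.12290 — 3 statements merged into one kernel-verified Lean document; each statement's English description precedes it below -/
import Mathlib

section
/- Let Ξ be a symmetric n×n random matrix with zeros on the diagonal and independent N(0, σ_{uv}²) entries above the diagonal, where all σ_{uv}² ≤ σ_max². Fix a partition of the index set {1,…,n} into K classes, and let Ξ^{(k,l)} for k, l = 1,…,K denote the corresponding K² submatrices of Ξ. Then there exist absolute constants C₁, C₂, C₃ such that for every t > 0, with probability at least 1 − e^{−t}, the sum over all k, l = 1,…,K of the squared operator norms ‖Ξ^{(k,l)}‖_op² is at most σ_max² (C₁ n K + C₂ K² log n + C₃ t). -/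
open MeasureTheory ProbabilityTheory

/-- The spectral (operator) norm of a real matrix, i.e. its largest singular value:
the operator norm of the induced linear map between Euclidean spaces. -/
noncomputable def opNormM {m n : Type} [Fintype m] [Fintype n] [DecidableEq n]
    (M : Matrix m n ℝ) : ℝ :=
  ‖LinearMap.toContinuousLinearMap (Matrix.toEuclideanLin M)‖

open Metric Finset Real Filter
open scoped ENNReal NNReal RealInnerProductSpace

lemma sep_card_le (ι : Type) [Fintype ι] [Nonempty ι] (s : Finset (EuclideanSpace ℝ ι))
    (hs : ∀ x ∈ s, ‖x‖ = 1) (hsep : ∀ x ∈ s, ∀ y ∈ s, x ≠ y → 1/4 ≤ dist x y) :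
    s.card ≤ 9 ^ (Fintype.card ι) := by
  have hV0 : 0 < volume (ball (0:EuclideanSpace ℝ ι) 1) := measure_ball_pos _ _ one_pos
  have hVt : volume (ball (0:EuclideanSpace ℝ ι) 1) < ⊤ := measure_ball_lt_top
  have hdisj : (↑s : Set (EuclideanSpace ℝ ι)).PairwiseDisjoint (fun x => ball x (1/8)) := by
    intro x hx y hy hxy
    apply ball_disjoint_ball
    calc (1/8 : ℝ) + 1/8 = 1/4 := by norm_num
    _ ≤ dist x y := hsep x hx y hy hxy
  have hmeas : ∀ b ∈ s, MeasurableSet (ball b (1/8 : ℝ)) := fun b _ => measurableSet_ball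
  have hunion : (⋃ b ∈ s, ball b (1/8 : ℝ)) ⊆ ball (0:EuclideanSpace ℝ ι) (9/8) := by
    intro z hz
    simp only [Set.mem_iUnion] at hz
    obtain ⟨b, hb, hzb⟩ := hz
    have h3 : dist z (0:EuclideanSpace ℝ ι) ≤ dist z b + dist b 0 := dist_triangle _ _ _
    have hb1 : dist b (0:EuclideanSpace ℝ ι) = 1 := by rw [dist_zero_right]; exact hs b hb
    rw [mem_ball] at hzb ⊢
    linarith
  have key : ((s.card : ℝ≥0∞)) * (ENNReal.ofReal ((1/8:ℝ) ^ (Fintype.card ι))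
        * volume (ball (0:EuclideanSpace ℝ ι) 1))
      ≤ ENNReal.ofReal ((9/8:ℝ) ^ (Fintype.card ι)) * volume (ball (0:EuclideanSpace ℝ ι) 1) := by
    calc ((s.card : ℝ≥0∞)) * (ENNReal.ofReal ((1/8:ℝ) ^ (Fintype.card ι))
        * volume (ball (0:EuclideanSpace ℝ ι) 1))
        = ∑ _b ∈ s, (ENNReal.ofReal ((1/8:ℝ) ^ (Fintype.card ι))
            * volume (ball (0:EuclideanSpace ℝ ι) 1)) := by rw [Finset.sum_const, nsmul_eq_mul]
      _ = ∑ b ∈ s, volume (ball b (1/8 : ℝ)) := by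
          refine Finset.sum_congr rfl fun b _ => ?_
          rw [Measure.addHaar_ball volume b (by norm_num : (0:ℝ) ≤ 1/8), finrank_euclideanSpace]
      _ = volume (⋃ b ∈ s, ball b (1/8 : ℝ)) := (measure_biUnion_finset hdisj hmeas).symm
      _ ≤ volume (ball (0:EuclideanSpace ℝ ι) (9/8)) := measure_mono hunion
      _ = _ := by
          rw [Measure.addHaar_ball volume _ (by norm_num : (0:ℝ) ≤ 9/8), finrank_euclideanSpace]
  have h8 : (0:ℝ) < (1/8:ℝ) ^ (Fintype.card ι) := by positivity
  have key2 : ((s.card : ℝ≥0∞)) * ENNReal.ofReal ((1/8:ℝ) ^ (Fintype.card ι))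
      ≤ ENNReal.ofReal ((9/8:ℝ) ^ (Fintype.card ι)) := by
    rw [← mul_assoc] at key
    exact (ENNReal.mul_le_mul_iff_left hV0.ne' hVt.ne).1 key
  have key3 : (s.card : ℝ) * (1/8:ℝ) ^ (Fintype.card ι) ≤ (9/8:ℝ) ^ (Fintype.card ι) := by
    have h2 := ENNReal.toReal_mono (by finiteness) key2
    rwa [ENNReal.toReal_mul, ENNReal.toReal_ofReal h8.le,
      ENNReal.toReal_ofReal (by positivity), ENNReal.toReal_natCast] at h2
  have h8d : (0:ℝ) < (8:ℝ) ^ (Fintype.card ι) := by positivity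
  have h9 : ((9:ℝ)/8) ^ (Fintype.card ι) * 8 ^ (Fintype.card ι) = 9 ^ (Fintype.card ι) := by
    rw [div_pow]; field_simp
  have h1 : ((1:ℝ)/8) ^ (Fintype.card ι) * 8 ^ (Fintype.card ι) = 1 := by
    rw [div_pow]; field_simp; exact one_pow _
  have hfin : (s.card : ℝ) ≤ (9:ℝ) ^ (Fintype.card ι) := by
    have h3 := mul_le_mul_of_nonneg_right key3 h8d.le
    rwa [mul_assoc, h1, h9, mul_one] at h3
  exact_mod_cast hfin

lemma exists_net (ι : Type) [Fintype ι] :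
    ∃ N : Finset (EuclideanSpace ℝ ι), (∀ x ∈ N, ‖x‖ = 1) ∧ N.card ≤ 9 ^ (Fintype.card ι) ∧
      ∀ x : EuclideanSpace ℝ ι, ‖x‖ = 1 → ∃ y ∈ N, ‖x - y‖ ≤ 1/4 := by
  classical
  rcases isEmpty_or_nonempty ι with hι | hι
  · refine ⟨∅, by simp, by simp, fun x hx => ?_⟩
    exfalso
    have : x = 0 := Subsingleton.elim x 0
    rw [this, norm_zero] at hx; norm_num at hx
  · set P : Finset (EuclideanSpace ℝ ι) → Prop := fun s =>
      (∀ x ∈ s, ‖x‖ = 1) ∧ ∀ x ∈ s, ∀ y ∈ s, x ≠ y → 1/4 ≤ dist x y with hP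
    have hbound : ∀ s, P s → s.card ≤ 9 ^ (Fintype.card ι) := fun s hs =>
      sep_card_le ι s hs.1 hs.2
    have hMne : (0:ℕ) ∈ {m | ∃ s, P s ∧ s.card = m} := ⟨∅, ⟨by simp, by simp⟩, rfl⟩
    have hMbd : ∀ m ∈ {m | ∃ s, P s ∧ s.card = m}, m ≤ 9 ^ (Fintype.card ι) := by
      rintro m ⟨s, hs, rfl⟩; exact hbound s hs
    obtain ⟨m, hmM, hmax⟩ := Set.Finite.exists_maximalFor id {m | ∃ s, P s ∧ s.card = m}
      (Set.Finite.subset (Set.finite_Iic (9 ^ (Fintype.card ι))) hMbd) ⟨0, hMne⟩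
    obtain ⟨s, hsP, hscard⟩ := hmM
    refine ⟨s, hsP.1, hscard ▸ hbound s hsP, fun x hx => ?_⟩
    by_contra hcon
    push_neg at hcon
    have hcon' : ∀ y ∈ s, 1/4 < dist x y := by
      intro y hy; rw [dist_eq_norm]; exact hcon y hy
    have hxs : x ∉ s := fun hxs => by
      have := hcon' x hxs; rw [dist_self] at this; norm_num at this
    have hPins : P (insert x s) := by
      constructor
      · intro y hy; rcases Finset.mem_insert.1 hy with rfl | hy; exacts [hx, hsP.1 y hy]
      · intro a ha b hb hab
        rcases Finset.mem_insert.1 ha with rfl | ha' <;> rcases Finset.mem_insert.1 hb with rfl | hb'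
        · exact absurd rfl hab
        · exact (hcon' b hb').le
        · rw [dist_comm]; exact (hcon' a ha').le
        · exact hsP.2 a ha' b hb' hab
    have hmem : (insert x s).card ∈ {m | ∃ s, P s ∧ s.card = m} := ⟨_, hPins, rfl⟩
    have hcard : (insert x s).card = s.card + 1 := Finset.card_insert_of_notMem hxs
    have := hmax hmem (by simp [id, hcard, hscard])
    simp only [id] at this
    omega

lemma sum_fiber_pairs {n K : ℕ} (c : Fin n → Fin K) (f : Fin n → Fin n → ℝ) :
    ∑ q : Fin K × Fin K, ∑ u : {u : Fin n // c u = q.1}, ∑ w : {w : Fin n // c w = q.2},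
      f u w = ∑ u, ∑ w, f u w := by
  rw [Fintype.sum_prod_type]
  calc ∑ k, ∑ l, ∑ u : {u : Fin n // c u = k}, ∑ w : {w : Fin n // c w = l}, f u w
      = ∑ k, ∑ u : {u : Fin n // c u = k}, ∑ l, ∑ w : {w : Fin n // c w = l}, f u w := by
        exact Finset.sum_congr rfl fun k _ => Finset.sum_comm
    _ = ∑ k, ∑ u : {u : Fin n // c u = k}, ∑ w, f u w := by
        refine sum_congr rfl fun k _ => sum_congr rfl fun u _ =>
          Fintype.sum_fiberwise c (fun w => f u w)
    _ = ∑ u, ∑ w, f u w := Fintype.sum_fiberwise c (fun u => ∑ w, f u w)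

lemma sum_pairs {n : ℕ} (g : Fin n → Fin n → ℝ) (hdiag : ∀ u, g u u = 0) :
    ∑ u, ∑ w, g u w
      = ∑ p : {p : Fin n × Fin n // p.1 < p.2}, (g p.1.1 p.1.2 + g p.1.2 p.1.1) := by
  classical
  rw [← Fintype.sum_prod_type' (f := fun u w => g u w)]
  have hsplit := Finset.sum_filter_add_sum_filter_not Finset.univ
    (fun p : Fin n × Fin n => p.1 < p.2) (fun p => g p.1 p.2)
  have hsplit2 := Finset.sum_filter_add_sum_filter_not
    (Finset.univ.filter (fun p : Fin n × Fin n => ¬ p.1 < p.2))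
    (fun p : Fin n × Fin n => p.2 < p.1) (fun p => g p.1 p.2)
  have hdiag0 : ∑ p ∈ (Finset.univ.filter (fun p : Fin n × Fin n => ¬ p.1 < p.2)).filter
      (fun p : Fin n × Fin n => ¬ p.2 < p.1), g p.1 p.2 = 0 := by
    refine Finset.sum_eq_zero fun p hp => ?_
    simp only [Finset.mem_filter] at hp
    have : p.1 = p.2 := le_antisymm (le_of_not_gt hp.2) (le_of_not_gt hp.1.2)
    rw [this]; exact hdiag p.2
  have hswap : ∑ p ∈ (Finset.univ.filter (fun p : Fin n × Fin n => ¬ p.1 < p.2)).filter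
      (fun p : Fin n × Fin n => p.2 < p.1), g p.1 p.2
      = ∑ p ∈ Finset.univ.filter (fun p : Fin n × Fin n => p.1 < p.2), g p.2 p.1 := by
    refine Finset.sum_nbij' (fun p => Prod.swap p) (fun p => Prod.swap p) ?_ ?_ ?_ ?_ ?_
    · intro p hp; simp only [Finset.mem_filter, Finset.mem_univ, true_and] at hp ⊢
      exact hp.2
    · intro p hp; simp only [Finset.mem_filter, Finset.mem_univ, true_and] at hp ⊢
      exact ⟨not_lt.2 (le_of_lt hp), hp⟩
    · intro p _; exact Prod.swap_swap p
    · intro p _; exact Prod.swap_swap p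
    · intro p _; rfl
  have hsub : ∑ p ∈ Finset.univ.filter (fun p : Fin n × Fin n => p.1 < p.2),
      (g p.1 p.2 + g p.2 p.1)
      = ∑ p : {p : Fin n × Fin n // p.1 < p.2}, (g p.1.1 p.1.2 + g p.1.2 p.1.1) := by
    refine Finset.sum_subtype _ (fun p => by simp) _
  rw [← hsub, Finset.sum_add_distrib]
  rw [← hsplit, ← hsplit2, hdiag0, hswap]
  ring

lemma net_abs_lower {ι : Type} [Fintype ι] (N : Finset (EuclideanSpace ℝ ι))
    (hN : ∀ x : EuclideanSpace ℝ ι, ‖x‖ = 1 → ∃ y ∈ N, ‖x - y‖ ≤ 1/4)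
    (v : EuclideanSpace ℝ ι) (hv : ∀ i, 0 ≤ v i) (hv0 : v ≠ 0) :
    ∃ lam ∈ N, (3/4) * ‖v‖ ≤ ∑ i, |lam i| * v i := by
  have hvn : ‖v‖ ≠ 0 := norm_ne_zero_iff.2 hv0
  have hvpos : 0 < ‖v‖ := lt_of_le_of_ne (norm_nonneg _) (Ne.symm hvn)
  set x : EuclideanSpace ℝ ι := ‖v‖⁻¹ • v with hxdef
  have hx1 : ‖x‖ = 1 := norm_smul_inv_norm hv0
  obtain ⟨lam, hlamN, hlam⟩ := hN x hx1
  refine ⟨lam, hlamN, ?_⟩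
  set a : EuclideanSpace ℝ ι := (WithLp.equiv 2 (ι → ℝ)).symm (fun i => |lam i|) with hadef
  have ha_apply : ∀ i, a i = |lam i| := fun i => rfl
  have hx_apply : ∀ i, x i = ‖v‖⁻¹ * v i := fun i => rfl
  have hxnonneg : ∀ i, 0 ≤ x i := fun i => by
    rw [hx_apply]; exact mul_nonneg (inv_nonneg.2 (norm_nonneg _)) (hv i)
  have hax : ‖a - x‖ ≤ 1/4 := by
    have h1 : ‖a - x‖ ≤ ‖lam - x‖ := by
      rw [EuclideanSpace.norm_eq, EuclideanSpace.norm_eq]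
      apply Real.sqrt_le_sqrt
      apply Finset.sum_le_sum
      intro i _
      have : (a - x) i = |lam i| - x i := by simp [ha_apply]
      rw [this]
      have h2 : (lam - x) i = lam i - x i := by simp
      rw [h2]
      have habs := abs_abs_sub_abs_le_abs_sub (lam i) (x i)
      rw [abs_of_nonneg (hxnonneg i)] at habs
      rw [Real.norm_eq_abs, Real.norm_eq_abs]
      exact pow_le_pow_left₀ (abs_nonneg _) habs 2
    calc ‖a - x‖ ≤ ‖lam - x‖ := h1
      _ = ‖x - lam‖ := norm_sub_rev _ _
      _ ≤ 1/4 := hlam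
  have hinner_av : ⟪a, v⟫ = ∑ i, |lam i| * v i := by
    rw [PiLp.inner_apply]
    exact Finset.sum_congr rfl fun i _ => by simp [ha_apply, RCLike.inner_apply]; ring
  have hinner_xv : ⟪x, v⟫ = ‖v‖ := by
    rw [hxdef, real_inner_smul_left, real_inner_self_eq_norm_sq, pow_two, ← mul_assoc,
      inv_mul_cancel₀ hvn, one_mul]
  have hsplit : ⟪a, v⟫ = ⟪x, v⟫ + ⟪a - x, v⟫ := by
    rw [inner_sub_left]; ring
  have hcs : |⟪a - x, v⟫| ≤ ‖a - x‖ * ‖v‖ := abs_real_inner_le_norm _ _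
  have : ⟪a - x, v⟫ ≥ -(1/4 * ‖v‖) := by
    have := neg_abs_le ⟪a - x, v⟫
    have h3 : ‖a - x‖ * ‖v‖ ≤ 1/4 * ‖v‖ := mul_le_mul_of_nonneg_right hax (norm_nonneg _)
    linarith
  rw [← hinner_av]
  rw [hsplit, hinner_xv]
  linarith


lemma opNormM_nonneg {m n : Type} [Fintype m] [Fintype n] [DecidableEq n]
    (M : Matrix m n ℝ) : 0 ≤ opNormM M := norm_nonneg _

lemma inner_toEuclideanLin {ι κ : Type} [Fintype ι] [Fintype κ] [DecidableEq ι]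
    (M : Matrix κ ι ℝ) (x : EuclideanSpace ℝ ι) (y : EuclideanSpace ℝ κ) :
    ⟪(Matrix.toEuclideanLin M) x, y⟫ = ∑ u : κ, ∑ w : ι, y u * M u w * x w := by
  rw [PiLp.inner_apply]
  simp only [Matrix.toEuclideanLin_apply, RCLike.inner_apply, conj_trivial]
  refine Finset.sum_congr rfl fun u _ => ?_
  simp only [Matrix.mulVec, dotProduct]
  rw [Finset.mul_sum]
  exact Finset.sum_congr rfl fun w _ => by ring

lemma opNormM_le_of_net {ι κ : Type} [Fintype ι] [Fintype κ] [DecidableEq ι]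
    (M : Matrix κ ι ℝ) (N : Finset (EuclideanSpace ℝ ι)) (N' : Finset (EuclideanSpace ℝ κ))
    (hN1 : ∀ x ∈ N, ‖x‖ = 1) (hN'1 : ∀ y ∈ N', ‖y‖ = 1)
    (hN : ∀ x : EuclideanSpace ℝ ι, ‖x‖ = 1 → ∃ y ∈ N, ‖x - y‖ ≤ 1/4)
    (hN' : ∀ x : EuclideanSpace ℝ κ, ‖x‖ = 1 → ∃ y ∈ N', ‖x - y‖ ≤ 1/4)
    (s : ℝ) (hs : 0 ≤ s)
    (hb : ∀ x ∈ N, ∀ y ∈ N', ∑ u : κ, ∑ w : ι, y u * M u w * x w ≤ s) :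
    opNormM M ≤ 2 * s := by
  set f := LinearMap.toContinuousLinearMap (Matrix.toEuclideanLin M) with hf
  rcases eq_or_lt_of_le (norm_nonneg f) with h0 | h0
  · rw [opNormM, ← h0]; linarith
  rcases isEmpty_or_nonempty ι with hι | hι
  · exfalso
    haveI : Subsingleton (EuclideanSpace ℝ ι) :=
      ⟨fun a b => by ext i; exact hι.elim i⟩
    have hz : f = 0 := by
      ext z i
      have : z = (0 : EuclideanSpace ℝ ι) := Subsingleton.elim _ _
      rw [this]; simp
    rw [hz] at h0; simp at h0
  rcases isEmpty_or_nonempty κ with hκ | hκ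
  · exfalso
    haveI : Subsingleton (EuclideanSpace ℝ κ) :=
      ⟨fun a b => by ext i; exact hκ.elim i⟩
    have hz : f = 0 := by ext z i; exact hκ.elim i
    rw [hz] at h0; simp at h0
  -- maximizer on the sphere
  obtain ⟨xs, hxs, hmax⟩ := (isCompact_sphere (0:EuclideanSpace ℝ ι) 1).exists_isMaxOn
    ⟨EuclideanSpace.single hι.some 1, by simp [EuclideanSpace.norm_single]⟩
    (Continuous.continuousOn (by continuity : Continuous fun x => ‖f x‖))
  have hxs1 : ‖xs‖ = 1 := by simpa [mem_sphere_iff_norm] using hxs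
  have hnorm_eq : ‖f‖ = ‖f xs‖ := by
    refine le_antisymm (f.opNorm_le_bound (norm_nonneg _) fun z => ?_)
      (by simpa [hxs1] using f.le_opNorm xs)
    rcases eq_or_ne z 0 with rfl | hz
    · simp
    · have hu : ‖z‖⁻¹ • z ∈ sphere (0:EuclideanSpace ℝ ι) 1 := by
        simp [mem_sphere_iff_norm, norm_smul, inv_mul_cancel₀ (norm_ne_zero_iff.2 hz)]
      have hm := hmax hu
      simp only [Set.mem_setOf_eq] at hm
      rw [_root_.map_smul, norm_smul, norm_inv, norm_norm] at hm
      calc ‖f z‖ = ‖z‖ * (‖z‖⁻¹ * ‖f z‖) := by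
            rw [← mul_assoc, mul_inv_cancel₀ (norm_ne_zero_iff.2 hz), one_mul]
        _ ≤ ‖z‖ * ‖f xs‖ := mul_le_mul_of_nonneg_left hm (norm_nonneg _)
        _ = ‖f xs‖ * ‖z‖ := mul_comm _ _
  have hfxs : f xs ≠ 0 := by
    intro h; rw [hnorm_eq, h, norm_zero] at h0; exact lt_irrefl _ h0
  set ys : EuclideanSpace ℝ κ := ‖f xs‖⁻¹ • f xs with hys
  have hys1 : ‖ys‖ = 1 := norm_smul_inv_norm hfxs
  have hinner : ⟪f xs, ys⟫ = ‖f‖ := by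
    rw [hys, real_inner_smul_right, real_inner_self_eq_norm_sq, hnorm_eq, pow_two,
      ← mul_assoc, inv_mul_cancel₀ (norm_ne_zero_iff.2 hfxs), one_mul]
  obtain ⟨x₀, hx₀N, hx₀⟩ := hN xs hxs1
  obtain ⟨y₀, hy₀N, hy₀⟩ := hN' ys hys1
  have key : ‖f‖ = ⟪f x₀, y₀⟫ + ⟪f (xs - x₀), y₀⟫ + ⟪f xs, ys - y₀⟫ := by
    rw [← hinner]
    simp only [map_sub, inner_sub_left, inner_sub_right]
    ring
  have h1 : ⟪f x₀, y₀⟫ ≤ s := by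
    rw [hf]
    have := hb x₀ hx₀N y₀ hy₀N
    rw [← inner_toEuclideanLin M x₀ y₀] at this
    simpa using this
  have h2 : ⟪f (xs - x₀), y₀⟫ ≤ ‖f‖ * (1/4) := by
    calc ⟪f (xs - x₀), y₀⟫ ≤ ‖f (xs - x₀)‖ * ‖y₀‖ := real_inner_le_norm _ _
      _ ≤ (‖f‖ * ‖xs - x₀‖) * 1 := by
          rw [hN'1 y₀ hy₀N]; exact mul_le_mul_of_nonneg_right (f.le_opNorm _) zero_le_one
      _ ≤ ‖f‖ * (1/4) := by rw [mul_one]; exact mul_le_mul_of_nonneg_left hx₀ (norm_nonneg _)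
  have h3 : ⟪f xs, ys - y₀⟫ ≤ ‖f‖ * (1/4) := by
    calc ⟪f xs, ys - y₀⟫ ≤ ‖f xs‖ * ‖ys - y₀‖ := real_inner_le_norm _ _
      _ ≤ ‖f‖ * (1/4) := by
          rw [← hnorm_eq]; exact mul_le_mul_of_nonneg_left hy₀ (norm_nonneg _)
  rw [opNormM, ← hf]
  linarith [key, h1, h2, h3]

lemma gaussian_shift (v : ℝ≥0) (hv : v ≠ 0) (b : ℝ) (x : ℝ) :
    gaussianPDFReal 0 v x * rexp (b * x)
      = rexp ((v:ℝ) * b^2 / 2) * gaussianPDFReal ((v:ℝ) * b) v x := by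
  have hv0 : (0:ℝ) < (v:ℝ) := by
    have := v.coe_nonneg
    rcases this.lt_or_eq with h | h
    · exact h
    · exact absurd (by exact_mod_cast h.symm) hv
  unfold gaussianPDFReal
  have key : rexp (-(x - 0) ^ 2 / (2 * (v:ℝ))) * rexp (b*x)
      = rexp ((v:ℝ) * b ^ 2 / 2) * rexp (-(x - (v:ℝ) * b) ^ 2 / (2 * (v:ℝ))) := by
    rw [← Real.exp_add, ← Real.exp_add]
    congr 1
    field_simp
    ring
  linear_combination (√(2 * π * (v:ℝ)))⁻¹ * key

lemma integrable_exp_gaussianReal (v : ℝ≥0) (b : ℝ) :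
    Integrable (fun x => rexp (b * x)) (gaussianReal 0 v) := by
  rcases eq_or_ne v 0 with rfl | hv
  · rw [gaussianReal_zero_var]
    exact (integrable_const (rexp (b * 0))).congr (ae_eq_dirac fun x => rexp (b*x)).symm
  · rw [gaussianReal_of_var_ne_zero 0 hv]
    rw [integrable_withDensity_iff (measurable_gaussianPDF 0 v)
      (Filter.Eventually.of_forall fun x => ENNReal.ofReal_lt_top)]
    have : (fun x => rexp (b * x) * (gaussianPDF 0 v x).toReal)
        = fun x => rexp ((v:ℝ) * b^2 / 2) * gaussianPDFReal ((v:ℝ) * b) v x := by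
      ext x
      rw [gaussianPDF, ENNReal.toReal_ofReal (gaussianPDFReal_nonneg 0 v x), mul_comm]
      exact gaussian_shift v hv b x
    rw [this]
    exact (integrable_gaussianPDFReal _ _).const_mul _
 
lemma integral_exp_gaussianReal (v : ℝ≥0) (b : ℝ) :
    ∫ x, rexp (b * x) ∂(gaussianReal 0 v) = rexp ((v:ℝ) * b^2 / 2) := by
  rcases eq_or_ne v 0 with rfl | hv
  · rw [gaussianReal_zero_var, integral_dirac]
    simp
  · rw [gaussianReal_of_var_ne_zero 0 hv]
    have hdens : (gaussianPDF 0 v) = fun x => ((Real.toNNReal (gaussianPDFReal 0 v x) : ℝ≥0) : ℝ≥0∞) := by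
      ext x; rw [gaussianPDF]; rfl
    rw [hdens, integral_withDensity_eq_integral_smul
      (measurable_gaussianPDFReal 0 v).real_toNNReal]
    have : (fun x => Real.toNNReal (gaussianPDFReal 0 v x) • rexp (b * x))
        = fun x => rexp ((v:ℝ) * b^2 / 2) * gaussianPDFReal ((v:ℝ) * b) v x := by
      ext x
      rw [NNReal.smul_def, smul_eq_mul, Real.coe_toNNReal _ (gaussianPDFReal_nonneg 0 v x)]
      exact gaussian_shift v hv b x
    rw [this, integral_const_mul, integral_gaussianPDFReal_eq_one _ hv, mul_one]

lemma iIndepFun_ae_congr {Ω ι : Type} [MeasurableSpace Ω] {μ : Measure Ω} {f g : ι → Ω → ℝ}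
    (hf : iIndepFun f μ)
    (h : ∀ i, f i =ᵐ[μ] g i) :
    iIndepFun g μ := by
  rw [iIndepFun_iff_measure_inter_preimage_eq_mul] at hf ⊢
  intro S sets hsets
  have hae : ∀ᵐ ω ∂μ, ∀ i ∈ S, f i ω = g i ω :=
    (Filter.eventually_all_finset S).2 fun i _ => h i
  have h1 : μ (⋂ i ∈ S, f i ⁻¹' sets i) = μ (⋂ i ∈ S, g i ⁻¹' sets i) := by
    apply measure_congr
    rw [Filter.eventuallyEq_set]
    filter_upwards [hae] with ω hω
    simp only [Set.mem_iInter, Set.mem_preimage]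
    constructor
    · intro hmem i hi; rw [← hω i hi]; exact hmem i hi
    · intro hmem i hi; rw [hω i hi]; exact hmem i hi
  calc μ (⋂ i ∈ S, g i ⁻¹' sets i) = μ (⋂ i ∈ S, f i ⁻¹' sets i) := h1.symm
    _ = ∏ i ∈ S, μ (f i ⁻¹' sets i) := hf S hsets
    _ = ∏ i ∈ S, μ (g i ⁻¹' sets i) := by
        refine Finset.prod_congr rfl fun i _ => measure_congr ?_
        rw [Filter.eventuallyEq_set]
        filter_upwards [h i] with ω hω
        simp only [Set.mem_preimage, hω]

lemma aemeasurable_of_map_gaussian {Ω : Type} [MeasurableSpace Ω] {Pr : Measure Ω}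
    {X : Ω → ℝ} {v : ℝ≥0} (hmap : Measure.map X Pr = gaussianReal 0 v) :
    AEMeasurable X Pr := by
  by_contra hc
  rw [Measure.map_of_not_aemeasurable hc] at hmap
  have h1 : (gaussianReal 0 v) Set.univ = 1 := measure_univ
  rw [← hmap] at h1
  simp at h1

lemma gaussian_weighted_tail {Ω : Type} [MeasurableSpace Ω] (Pr : Measure Ω)
    [IsProbabilityMeasure Pr] {ι : Type} [Fintype ι]
    (X : ι → Ω → ℝ) (v : ι → ℝ≥0)
    (hmap : ∀ i, Measure.map (X i) Pr = gaussianReal 0 (v i))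
    (hind : iIndepFun X Pr)
    (σ2 : ℝ) (hσ2 : 0 ≤ σ2) (hv : ∀ i, (v i : ℝ) ≤ σ2)
    (w : ι → ℝ) (hw : ∑ i, (w i)^2 ≤ 2)
    (τ s : ℝ) (hτ : 0 < τ) (hs : s^2 = 4 * σ2 * τ) (hs0 : 0 ≤ s) :
    Pr {ω | s < ∑ i, w i * X i ω} ≤ ENNReal.ofReal (rexp (-τ)) := by
  classical
  have hXae : ∀ i, AEMeasurable (X i) Pr := fun i => aemeasurable_of_map_gaussian (hmap i)
  set X' : ι → Ω → ℝ := fun i => (hXae i).mk (X i) with hX'def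
  have h_eq : ∀ i, X i =ᵐ[Pr] X' i := fun i => (hXae i).ae_eq_mk
  have hX'meas : ∀ i, Measurable (X' i) := fun i => (hXae i).measurable_mk
  have hmap' : ∀ i, Measure.map (X' i) Pr = gaussianReal 0 (v i) := fun i => by
    rw [← Measure.map_congr (h_eq i)]; exact hmap i
  have hind' : iIndepFun X' Pr :=
    iIndepFun_ae_congr hind h_eq
  have hsetcong : Pr {ω | s < ∑ i, w i * X i ω} = Pr {ω | s < ∑ i, w i * X' i ω} := by
    apply measure_congr
    rw [Filter.eventuallyEq_set]
    have hae : ∀ᵐ ω ∂Pr, ∀ i, X i ω = X' i ω := (MeasureTheory.ae_all_iff).2 h_eq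
    filter_upwards [hae] with ω hω
    have hsum : (∑ i, w i * X i ω) = ∑ i, w i * X' i ω :=
      Finset.sum_congr rfl fun i _ => by rw [hω i]
    constructor <;> intro hlt
    · rwa [hsum] at hlt
    · rwa [← hsum] at hlt
  rw [hsetcong]
  rcases eq_or_lt_of_le hσ2 with hσ0 | hσpos
  · -- degenerate case: all variances zero
    have hv0 : ∀ i, v i = 0 := fun i => by
      have h1 : (v i : ℝ) ≤ 0 := le_of_le_of_eq (hv i) hσ0.symm
      have h2 : (0:ℝ) ≤ (v i : ℝ) := (v i).coe_nonneg
      exact_mod_cast le_antisymm h1 h2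
    have hX0 : ∀ i, ∀ᵐ ω ∂Pr, X' i ω = 0 := by
      intro i
      have hnull : Pr (X' i ⁻¹' ({0}ᶜ)) = 0 := by
        rw [← Measure.map_apply_of_aemeasurable (hX'meas i).aemeasurable
          (measurableSet_singleton (0:ℝ)).compl, hmap' i, hv0 i, gaussianReal_zero_var,
          Measure.dirac_apply' _ (measurableSet_singleton (0:ℝ)).compl]
        simp
      rw [ae_iff]
      have hset : {ω | ¬ X' i ω = 0} = X' i ⁻¹' ({0}ᶜ) := by ext ω; simp
      rw [hset]; exact hnull
    have hS0 : ∀ᵐ ω ∂Pr, ∑ i, w i * X' i ω = 0 := by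
      have := (MeasureTheory.ae_all_iff).2 hX0
      filter_upwards [this] with ω hω
      simp [hω]
    have hs' : s = 0 := by
      have h0 : s^2 = 0 := by rw [hs, ← hσ0]; ring
      exact (pow_eq_zero_iff (two_ne_zero)).1 h0
    have hnull : Pr {ω | s < ∑ i, w i * X' i ω} = 0 := by
      refine measure_mono_null (t := {ω | ¬ (∑ i, w i * X' i ω = 0)}) ?_ ?_
      · intro ω hω
        simp only [Set.mem_setOf_eq] at hω ⊢
        intro hc; rw [hc, hs'] at hω; exact lt_irrefl 0 hω
      · rw [← ae_iff]; exact hS0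
    rw [hnull]; exact zero_le
  · -- main case
    set θ : ℝ := s / (2 * σ2) with hθdef
    have hθ0 : 0 ≤ θ := div_nonneg hs0 (by linarith)
    set Y : ι → Ω → ℝ := fun i ω => w i * X' i ω with hYdef
    have hYmeas : ∀ i, Measurable (Y i) := fun i => (hX'meas i).const_mul (w i)
    have hindY : iIndepFun Y Pr := by
      have := hind'.comp (fun i => fun x : ℝ => w i * x)
        (fun i => measurable_const_mul (w i))
      exact this
    have hintY : ∀ i, Integrable (fun ω => rexp (θ * Y i ω)) Pr := by
      intro i
      have hfun : (fun ω => rexp (θ * Y i ω)) = (fun x => rexp ((θ * w i) * x)) ∘ X' i := by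
        ext ω; simp only [hYdef, Function.comp_apply]; ring_nf
      rw [hfun]
      refine (integrable_map_measure ?_ (hX'meas i).aemeasurable).1 ?_
      · exact (Continuous.aestronglyMeasurable (by continuity))
      · rw [hmap' i]; exact integrable_exp_gaussianReal _ _
    have hmgfY : ∀ i, mgf (Y i) Pr θ = rexp ((v i : ℝ) * (θ * w i)^2 / 2) := by
      intro i
      unfold mgf
      have hfun : (fun ω => rexp (θ * Y i ω)) = fun ω => rexp ((θ * w i) * X' i ω) := by
        ext ω; simp only [hYdef]; ring_nf
      rw [hfun]
      rw [← integral_map (hX'meas i).aemeasurable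
        (f := fun x => rexp ((θ * w i) * x)) (Continuous.aestronglyMeasurable (by continuity))]
      rw [hmap' i]
      exact integral_exp_gaussianReal _ _
    have hint_sum : Integrable (fun ω => rexp (θ * (∑ i, Y i) ω)) Pr :=
      iIndepFun.integrable_exp_mul_sum hindY hYmeas (fun i _ => hintY i)
    have hcher := measure_ge_le_exp_mul_mgf (X := ∑ i, Y i) (μ := Pr) s hθ0 hint_sum
    have hmgf_sum : mgf (∑ i, Y i) Pr θ ≤ rexp (θ^2 * σ2) := by
      rw [iIndepFun.mgf_sum hindY hYmeas]
      have : ∏ i, mgf (Y i) Pr θ = rexp (∑ i, (v i : ℝ) * (θ * w i)^2 / 2) := by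
        rw [Real.exp_sum]
        exact Finset.prod_congr rfl fun i _ => hmgfY i
      rw [this]
      apply Real.exp_le_exp.2
      calc ∑ i, (v i : ℝ) * (θ * w i)^2 / 2 ≤ ∑ i, σ2 * (θ^2 * (w i)^2) / 2 := by
            refine Finset.sum_le_sum fun i _ => ?_
            rw [mul_pow]
            have h1 : (v i : ℝ) * (θ^2 * (w i)^2) ≤ σ2 * (θ^2 * (w i)^2) :=
              mul_le_mul_of_nonneg_right (hv i) (by positivity)
            linarith
        _ = σ2 * θ^2 / 2 * ∑ i, (w i)^2 := by
            rw [Finset.mul_sum]; exact Finset.sum_congr rfl fun i _ => by ring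
        _ ≤ σ2 * θ^2 / 2 * 2 := by
            refine mul_le_mul_of_nonneg_left hw (by positivity)
        _ = θ^2 * σ2 := by ring
    have hexp_eq : rexp (-θ * s) * rexp (θ^2 * σ2) = rexp (-τ) := by
      rw [← Real.exp_add]
      congr 1
      have hσ2' : σ2 ≠ 0 := ne_of_gt hσpos
      rw [hθdef]
      field_simp
      nlinarith [hs]
    have hfinal : (Pr {ω | s ≤ (∑ i, Y i) ω}).toReal ≤ rexp (-τ) := by
      calc (Pr {ω | s ≤ (∑ i, Y i) ω}).toReal ≤ rexp (-θ * s) * mgf (∑ i, Y i) Pr θ := hcher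
        _ ≤ rexp (-θ * s) * rexp (θ^2 * σ2) := by
            exact mul_le_mul_of_nonneg_left hmgf_sum (le_of_lt (Real.exp_pos _))
        _ = rexp (-τ) := hexp_eq
    calc Pr {ω | s < ∑ i, w i * X' i ω} ≤ Pr {ω | s ≤ (∑ i, Y i) ω} := by
          apply measure_mono
          intro ω hω
          simp only [Set.mem_setOf_eq] at hω ⊢
          rw [Finset.sum_apply]
          exact le_of_lt hω
      _ = ENNReal.ofReal ((Pr {ω | s ≤ (∑ i, Y i) ω}).toReal) :=
          (ENNReal.ofReal_toReal (measure_ne_top _ _)).symm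
      _ ≤ ENNReal.ofReal (rexp (-τ)) := ENNReal.ofReal_le_ofReal hfinal


section Defs
variable {n K : ℕ} (c : Fin n → Fin K)

abbrev EE (k : Fin K) : Type := EuclideanSpace ℝ {u : Fin n // c u = k}

abbrev TT : Type := EuclideanSpace ℝ (Fin K × Fin K) ×
  ((q : Fin K × Fin K) → EE c q.1 × EE c q.2)

noncomputable def JJ (NΛ : Finset (EuclideanSpace ℝ (Fin K × Fin K)))
    (N : (k : Fin K) → Finset (EE c k)) : Finset (TT c) :=
  letI : ∀ k : Fin K, DecidableEq (EE c k) := fun _ => Classical.decEq _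
  NΛ ×ˢ Fintype.piFinset (fun q : Fin K × Fin K => (insert 0 (N q.1)) ×ˢ (insert 0 (N q.2)))

lemma mem_JJ_iff {NΛ : Finset (EuclideanSpace ℝ (Fin K × Fin K))}
    {N : (k : Fin K) → Finset (EE c k)} {j : TT c} :
    j ∈ JJ c NΛ N ↔ j.1 ∈ NΛ ∧ ∀ q : Fin K × Fin K,
      ((j.2 q).1 = 0 ∨ (j.2 q).1 ∈ N q.1) ∧ ((j.2 q).2 = 0 ∨ (j.2 q).2 ∈ N q.2) := by
  classical
  rw [JJ, Finset.mem_product, Fintype.mem_piFinset]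
  apply and_congr Iff.rfl
  apply forall_congr'
  intro q
  simp only [Finset.mem_product, Finset.mem_insert]

def WW (j : TT c) (u w : Fin n) : ℝ :=
  |j.1 (c u, c w)| * (j.2 (c u, c w)).1 ⟨u, rfl⟩ * (j.2 (c u, c w)).2 ⟨w, rfl⟩

def weightW (j : TT c) (p : {p : Fin n × Fin n // p.1 < p.2}) : ℝ :=
  WW c j p.1.1 p.1.2 + WW c j p.1.2 p.1.1

def GMdef (j : TT c) (A : Matrix (Fin n) (Fin n) ℝ) : ℝ :=
  ∑ u, ∑ w, WW c j u w * A u w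

lemma WW_eq (j : TT c) (q : Fin K × Fin K) (u : {u : Fin n // c u = q.1})
    (w : {w : Fin n // c w = q.2}) :
    WW c j u w = |j.1 q| * (j.2 q).1 u * (j.2 q).2 w := by
  obtain ⟨k, l⟩ := q
  obtain ⟨u, hu⟩ := u
  obtain ⟨w, hw⟩ := w
  dsimp only at hu hw
  subst hu
  subst hw
  rfl

lemma eucl_norm_sq {ι : Type} [Fintype ι] (x : EuclideanSpace ℝ ι) :
    ‖x‖^2 = ∑ i, (x i)^2 := by
  rw [EuclideanSpace.norm_eq, Real.sq_sqrt (by positivity)]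
  exact Finset.sum_congr rfl fun i _ => by rw [Real.norm_eq_abs, sq_abs]

lemma mem_JJ_props (NΛ : Finset (EuclideanSpace ℝ (Fin K × Fin K)))
    (N : (k : Fin K) → Finset (EE c k))
    (hNΛ1 : ∀ x ∈ NΛ, ‖x‖ = 1) (hN1 : ∀ k, ∀ x ∈ N k, ‖x‖ = 1)
    (j : TT c) (hj : j ∈ JJ c NΛ N) :
    ‖j.1‖ = 1 ∧ ∀ q, ‖(j.2 q).1‖ ≤ 1 ∧ ‖(j.2 q).2‖ ≤ 1 := by
  rw [mem_JJ_iff] at hj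
  refine ⟨hNΛ1 _ hj.1, fun q => ⟨?_, ?_⟩⟩
  · rcases (hj.2 q).1 with h | h
    · rw [h, norm_zero]; norm_num
    · rw [hN1 _ _ h]
  · rcases (hj.2 q).2 with h | h
    · rw [h, norm_zero]; norm_num
    · rw [hN1 _ _ h]

lemma GM_eq_pairsum (j : TT c) (A : Matrix (Fin n) (Fin n) ℝ)
    (hsym : A.IsSymm) (hdiag : ∀ u, A u u = 0) :
    GMdef c j A = ∑ p : {p : Fin n × Fin n // p.1 < p.2},
      weightW c j p * A p.1.1 p.1.2 := by
  rw [GMdef, sum_pairs (fun u w => WW c j u w * A u w)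
    (fun u => by show WW c j u u * A u u = 0; rw [hdiag u, mul_zero])]
  refine Finset.sum_congr rfl fun p _ => ?_
  have hsymuw : A p.1.2 p.1.1 = A p.1.1 p.1.2 := hsym.apply p.1.1 p.1.2
  rw [weightW, hsymuw]
  ring

lemma weight_sq_le (j : TT c)
    (hj1 : ‖j.1‖ = 1) (hj2 : ∀ q, ‖(j.2 q).1‖ ≤ 1 ∧ ‖(j.2 q).2‖ ≤ 1) :
    ∑ p : {p : Fin n × Fin n // p.1 < p.2}, (weightW c j p)^2 ≤ 2 := by
  classical
  set g' : Fin n → Fin n → ℝ := fun u w => if u = w then 0 else 2 * (WW c j u w)^2 with hg'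
  have hg'diag : ∀ u, g' u u = 0 := fun u => by simp [hg']
  have h1 : ∑ p : {p : Fin n × Fin n // p.1 < p.2}, (weightW c j p)^2
      ≤ ∑ p : {p : Fin n × Fin n // p.1 < p.2}, (g' p.1.1 p.1.2 + g' p.1.2 p.1.1) := by
    refine Finset.sum_le_sum fun p _ => ?_
    have hne : p.1.1 ≠ p.1.2 := ne_of_lt p.2
    have e1 : g' p.1.1 p.1.2 = 2 * (WW c j p.1.1 p.1.2)^2 := by simp [hg', hne]
    have e2 : g' p.1.2 p.1.1 = 2 * (WW c j p.1.2 p.1.1)^2 := by simp [hg', hne.symm]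
    rw [e1, e2, weightW]
    nlinarith [sq_nonneg (WW c j p.1.1 p.1.2 - WW c j p.1.2 p.1.1)]
  have h2 : ∑ p : {p : Fin n × Fin n // p.1 < p.2}, (g' p.1.1 p.1.2 + g' p.1.2 p.1.1)
      = ∑ u, ∑ w, g' u w := (sum_pairs g' hg'diag).symm
  have h3 : ∑ u, ∑ w, g' u w ≤ ∑ u, ∑ w, 2 * (WW c j u w)^2 := by
    refine Finset.sum_le_sum fun u _ => Finset.sum_le_sum fun w _ => ?_
    by_cases h : u = w
    · rw [hg']; simp [h]; positivity
    · simp [hg', h]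
  have h4 : ∑ u, ∑ w, 2 * (WW c j u w)^2 ≤ 2 := by
    rw [← sum_fiber_pairs c (fun u w => 2 * (WW c j u w)^2)]
    have hq : ∀ q : Fin K × Fin K,
        ∑ u : {u : Fin n // c u = q.1}, ∑ w : {w : Fin n // c w = q.2},
          2 * (WW c j ↑u ↑w)^2 ≤ 2 * (j.1 q)^2 := by
      intro q
      have hptwise : ∀ (u : {u : Fin n // c u = q.1}) (w : {w : Fin n // c w = q.2}),
          2 * (WW c j ↑u ↑w)^2
            = 2 * (j.1 q)^2 * ((j.2 q).1 u)^2 * ((j.2 q).2 w)^2 := by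
        intro u w
        rw [WW_eq c j q u w, mul_pow, mul_pow, sq_abs]
        ring
      calc ∑ u : {u : Fin n // c u = q.1}, ∑ w : {w : Fin n // c w = q.2},
            2 * (WW c j ↑u ↑w)^2
          = 2 * (j.1 q)^2 * ((∑ u : {u : Fin n // c u = q.1}, ((j.2 q).1 u)^2)
              * (∑ w : {w : Fin n // c w = q.2}, ((j.2 q).2 w)^2)) := by
            rw [Finset.sum_mul_sum, Finset.mul_sum]
            refine Finset.sum_congr rfl fun u _ => ?_
            rw [Finset.mul_sum]
            exact Finset.sum_congr rfl fun w _ => by rw [hptwise u w]; ring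
        _ ≤ 2 * (j.1 q)^2 * (1 * 1) := by
            have e1 : (∑ u : {u : Fin n // c u = q.1}, ((j.2 q).1 u)^2) = ‖(j.2 q).1‖^2 :=
              (eucl_norm_sq _).symm
            have e2 : (∑ w : {w : Fin n // c w = q.2}, ((j.2 q).2 w)^2) = ‖(j.2 q).2‖^2 :=
              (eucl_norm_sq _).symm
            refine mul_le_mul_of_nonneg_left ?_ (by positivity)
            refine mul_le_mul ?_ ?_ (by rw [e2]; positivity) zero_le_one
            · rw [e1]; calc ‖(j.2 q).1‖^2 ≤ 1^2 :=
                pow_le_pow_left₀ (norm_nonneg _) (hj2 q).1 2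
              _ = 1 := one_pow 2
            · rw [e2]; calc ‖(j.2 q).2‖^2 ≤ 1^2 :=
                pow_le_pow_left₀ (norm_nonneg _) (hj2 q).2 2
              _ = 1 := one_pow 2
        _ = 2 * (j.1 q)^2 := by ring
    calc ∑ q : Fin K × Fin K, ∑ u : {u : Fin n // c u = q.1},
          ∑ w : {w : Fin n // c w = q.2}, 2 * (WW c j ↑u ↑w)^2
        ≤ ∑ q : Fin K × Fin K, 2 * (j.1 q)^2 := Finset.sum_le_sum fun q _ => hq q
      _ = 2 * ∑ q : Fin K × Fin K, (j.1 q)^2 := by rw [Finset.mul_sum]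
      _ = 2 * ‖j.1‖^2 := by rw [eucl_norm_sq]
      _ = 2 := by rw [hj1]; norm_num
  linarith [h1, h2.le, h3, h4]

end Defs

lemma det_bound {n K : ℕ} (c : Fin n → Fin K)
    (NΛ : Finset (EuclideanSpace ℝ (Fin K × Fin K)))
    (hNΛnet : ∀ x : EuclideanSpace ℝ (Fin K × Fin K), ‖x‖ = 1 → ∃ y ∈ NΛ, ‖x - y‖ ≤ 1/4)
    (N : (k : Fin K) → Finset (EE c k))
    (hN1 : ∀ k, ∀ x ∈ N k, ‖x‖ = 1)
    (hNnet : ∀ k, ∀ x : EE c k, ‖x‖ = 1 → ∃ y ∈ N k, ‖x - y‖ ≤ 1/4)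
    (A : Matrix (Fin n) (Fin n) ℝ) (s0 : ℝ) (hs0 : 0 ≤ s0)
    (hG : ∀ j ∈ JJ c NΛ N, GMdef c j A ≤ s0) :
    ∑ k : Fin K, ∑ l : Fin K, (opNormM (A.submatrix
        (fun u : {u : Fin n // c u = k} => (u : Fin n))
        (fun u : {u : Fin n // c u = l} => (u : Fin n))))^2 ≤ 9 * s0^2 := by
  classical
  set Bl : (q : Fin K × Fin K) → Matrix {u : Fin n // c u = q.1} {w : Fin n // c w = q.2} ℝ :=
    fun q => A.submatrix (fun u => (u : Fin n)) (fun w => (w : Fin n)) with hBl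
  set Φ : (q : Fin K × Fin K) → (EE c q.1 × EE c q.2) → ℝ :=
    fun q xy => ∑ u, ∑ w, xy.1 u * Bl q u w * xy.2 w with hΦ
  set v : EuclideanSpace ℝ (Fin K × Fin K) :=
    (WithLp.equiv 2 ((Fin K × Fin K) → ℝ)).symm (fun q => opNormM (Bl q)) with hvdef
  have hv_apply : ∀ q, v q = opNormM (Bl q) := fun _ => rfl
  have hsum_eq : ∑ k : Fin K, ∑ l : Fin K, (opNormM (A.submatrix
        (fun u : {u : Fin n // c u = k} => (u : Fin n))
        (fun u : {u : Fin n // c u = l} => (u : Fin n))))^2 = ‖v‖^2 := by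
    rw [eucl_norm_sq v, Fintype.sum_prod_type]
    rfl
  rw [hsum_eq]
  rcases eq_or_ne v 0 with hv0 | hv0
  · rw [hv0, norm_zero]
    nlinarith [sq_nonneg s0]
  obtain ⟨lam, hlamN, hlam⟩ := net_abs_lower NΛ hNΛnet v
    (fun q => by rw [hv_apply]; exact norm_nonneg _) hv0
  have hex : ∀ q : Fin K × Fin K, ∃ xy ∈ (insert (0:EE c q.1) (N q.1)) ×ˢ
      (insert (0:EE c q.2) (N q.2)),
      ∀ xy' ∈ (insert (0:EE c q.1) (N q.1)) ×ˢ (insert (0:EE c q.2) (N q.2)),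
        Φ q xy' ≤ Φ q xy := by
    intro q
    obtain ⟨xy, hmem, hmax⟩ := Finset.exists_max_image _ (Φ q)
      ⟨(0,0), Finset.mem_product.2 ⟨Finset.mem_insert_self _ _, Finset.mem_insert_self _ _⟩⟩
    exact ⟨xy, hmem, hmax⟩
  choose χ hχmem hχmax using hex
  have hjJ : ((lam, χ) : TT c) ∈ JJ c NΛ N := by
    rw [mem_JJ_iff]
    refine ⟨hlamN, fun q => ?_⟩
    have hq := hχmem q
    rw [Finset.mem_product] at hq
    exact ⟨Finset.mem_insert.1 hq.1, Finset.mem_insert.1 hq.2⟩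
  have hΦ00 : ∀ q, Φ q (0, 0) = 0 := by
    intro q
    rw [hΦ]
    refine Finset.sum_eq_zero fun u _ => Finset.sum_eq_zero fun w _ => ?_
    show (0:EE c q.1) u * Bl q u w * (0:EE c q.2) w = 0
    have : (0:EE c q.1) u = 0 := rfl
    rw [this, zero_mul, zero_mul]
  have hΦpos : ∀ q, 0 ≤ Φ q (χ q) := fun q => by
    rw [← hΦ00 q]
    exact hχmax q (0,0)
      (Finset.mem_product.2 ⟨Finset.mem_insert_self _ _, Finset.mem_insert_self _ _⟩)
  have hblock : ∀ q, v q ≤ 2 * Φ q (χ q) := by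
    intro q
    rw [hv_apply]
    refine opNormM_le_of_net (Bl q) (N q.2) (N q.1) (hN1 q.2) (hN1 q.1)
      (hNnet q.2) (hNnet q.1) _ (hΦpos q) ?_
    intro x hx y hy
    have hmem' : ((y, x) : EE c q.1 × EE c q.2) ∈ (insert (0:EE c q.1) (N q.1)) ×ˢ
        (insert (0:EE c q.2) (N q.2)) :=
      Finset.mem_product.2 ⟨Finset.mem_insert_of_mem hy, Finset.mem_insert_of_mem hx⟩
    exact hχmax q (y, x) hmem'
  have hGM : GMdef c (lam, χ) A = ∑ q, |lam q| * Φ q (χ q) := by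
    rw [GMdef, ← sum_fiber_pairs c (fun u w => WW c (lam, χ) u w * A u w)]
    refine Finset.sum_congr rfl fun q _ => ?_
    rw [hΦ, Finset.mul_sum]
    refine Finset.sum_congr rfl fun u _ => ?_
    rw [Finset.mul_sum]
    refine Finset.sum_congr rfl fun w _ => ?_
    rw [WW_eq c (lam, χ) q u w]
    show |lam q| * (χ q).1 u * (χ q).2 w * A ↑u ↑w
      = |lam q| * ((χ q).1 u * Bl q u w * (χ q).2 w)
    rw [hBl]
    show |lam q| * (χ q).1 u * (χ q).2 w * A ↑u ↑w
      = |lam q| * ((χ q).1 u * A ↑u ↑w * (χ q).2 w)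
    ring
  have h2 : ∑ q, |lam q| * v q ≤ 2 * GMdef c (lam, χ) A := by
    rw [hGM, Finset.mul_sum]
    refine Finset.sum_le_sum fun q _ => ?_
    calc |lam q| * v q ≤ |lam q| * (2 * Φ q (χ q)) :=
        mul_le_mul_of_nonneg_left (hblock q) (abs_nonneg _)
      _ = 2 * (|lam q| * Φ q (χ q)) := by ring
  have h4 := hG _ hjJ
  have hvle : ‖v‖ ≤ 3 * s0 := by linarith
  calc ‖v‖^2 ≤ (3*s0)^2 := pow_le_pow_left₀ (norm_nonneg _) hvle 2
    _ = 9 * s0^2 := by ring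

section CardMain

lemma card_JJ {n K : ℕ} (c : Fin n → Fin K)
    (NΛ : Finset (EuclideanSpace ℝ (Fin K × Fin K)))
    (N : (k : Fin K) → Finset (EE c k))
    (hNΛcard : NΛ.card ≤ 9 ^ (Fintype.card (Fin K × Fin K)))
    (hNcard : ∀ k, (N k).card ≤ 9 ^ (Fintype.card {u : Fin n // c u = k})) :
    (JJ c NΛ N).card ≤ 36 ^ (K * K) * 9 ^ (2 * (n * K)) := by
  classical
  letI : ∀ k : Fin K, DecidableEq (EE c k) := fun _ => Classical.decEq _
  set m : Fin K → ℕ := fun k => Fintype.card {u : Fin n // c u = k} with hm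
  have hsum_m : ∑ k, m k = n := by
    have h1 := Fintype.sum_fiberwise c (fun _ : Fin n => (1:ℕ))
    simpa [hm] using h1
  have hcard : (JJ c NΛ N).card = NΛ.card * ∏ q : Fin K × Fin K,
      ((insert (0:EE c q.1) (N q.1)).card * (insert (0:EE c q.2) (N q.2)).card) := by
    rw [JJ, Finset.card_product, Fintype.card_piFinset]
    congr 1
    exact Finset.prod_congr rfl fun q _ => Finset.card_product _ _
  have hfac : ∀ k : Fin K, (insert (0:EE c k) (N k)).card ≤ 2 * 9 ^ (m k) := by
    intro k
    calc (insert (0:EE c k) (N k)).card ≤ (N k).card + 1 := Finset.card_insert_le _ _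
      _ ≤ 9 ^ (m k) + 1 := by exact Nat.add_le_add_right (hNcard k) 1
      _ ≤ 2 * 9 ^ (m k) := by
          have : 1 ≤ 9 ^ (m k) := Nat.one_le_pow _ _ (by norm_num)
          omega
  have hKK : Fintype.card (Fin K × Fin K) = K * K := by
    rw [Fintype.card_prod, Fintype.card_fin]
  have hprod : ∏ q : Fin K × Fin K,
      ((insert (0:EE c q.1) (N q.1)).card * (insert (0:EE c q.2) (N q.2)).card)
      ≤ ∏ q : Fin K × Fin K, ((2 * 9 ^ (m q.1)) * (2 * 9 ^ (m q.2))) := by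
    refine Finset.prod_le_prod' fun q _ => ?_
    exact Nat.mul_le_mul (hfac q.1) (hfac q.2)
  have hsum1 : ∑ q : Fin K × Fin K, m q.1 = K * n := by
    rw [Fintype.sum_prod_type]
    calc ∑ k : Fin K, ∑ _l : Fin K, m k = ∑ k : Fin K, K * m k := by
          refine Finset.sum_congr rfl fun k _ => ?_
          rw [Finset.sum_const, Finset.card_univ, Fintype.card_fin, smul_eq_mul]
      _ = K * ∑ k, m k := by rw [Finset.mul_sum]
      _ = K * n := by rw [hsum_m]
  have hsum2 : ∑ q : Fin K × Fin K, m q.2 = K * n := by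
    rw [Fintype.sum_prod_type]
    calc ∑ _k : Fin K, ∑ l : Fin K, m l = ∑ _k : Fin K, n := by
          refine Finset.sum_congr rfl fun k _ => hsum_m
      _ = K * n := by rw [Finset.sum_const, Finset.card_univ, Fintype.card_fin, smul_eq_mul]
  have hprod2 : ∏ q : Fin K × Fin K, ((2 * 9 ^ (m q.1)) * (2 * 9 ^ (m q.2)))
      = (2 ^ (K*K) * 9 ^ (K*n)) * (2 ^ (K*K) * 9 ^ (K*n)) := by
    rw [Finset.prod_mul_distrib]
    congr 1
    · rw [Finset.prod_mul_distrib, Finset.prod_const, Finset.card_univ, hKK,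
        Finset.prod_pow_eq_pow_sum, hsum1]
    · rw [Finset.prod_mul_distrib, Finset.prod_const, Finset.card_univ, hKK,
        Finset.prod_pow_eq_pow_sum, hsum2]
  calc (JJ c NΛ N).card
      ≤ 9 ^ (K*K) * ((2 ^ (K*K) * 9 ^ (K*n)) * (2 ^ (K*K) * 9 ^ (K*n))) := by
        rw [hcard]
        refine Nat.mul_le_mul ?_ ?_
        · rw [hKK] at hNΛcard; exact hNΛcard
        · rw [← hprod2]; exact hprod
    _ = 36 ^ (K * K) * 9 ^ (2 * (n * K)) := by
        have h36 : (36:ℕ) ^ (K*K) = 9 ^ (K*K) * (2 ^ (K*K) * 2 ^ (K*K)) := by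
          rw [← Nat.mul_pow, ← Nat.mul_pow]
        have h9 : (9:ℕ) ^ (2 * (n * K)) = 9 ^ (K*n) * 9 ^ (K*n) := by
          rw [← pow_add]
          ring_nf
        rw [h36, h9]
        ring

end CardMain


lemma log36_le : Real.log 36 ≤ 4 := by
  rw [Real.log_le_iff_le_exp (by norm_num)]
  have h1 : (2.7182818283:ℝ)^(4:ℕ) ≤ (Real.exp 1)^(4:ℕ) :=
    pow_le_pow_left₀ (by norm_num) Real.exp_one_gt_d9.le 4
  have h2 : (Real.exp 1)^(4:ℕ) = Real.exp 4 := by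
    rw [← Real.exp_nat_mul]; norm_num
  nlinarith [h1, h2]

lemma log9_le : Real.log 9 ≤ 3 := by
  rw [Real.log_le_iff_le_exp (by norm_num)]
  have h1 : (2.7182818283:ℝ)^(3:ℕ) ≤ (Real.exp 1)^(3:ℕ) :=
    pow_le_pow_left₀ (by norm_num) Real.exp_one_gt_d9.le 3
  have h2 : (Real.exp 1)^(3:ℕ) = Real.exp 3 := by
    rw [← Real.exp_nat_mul]; norm_num
  nlinarith [h1, h2]

set_option maxHeartbeats 1000000 in
/-- Let `Ξ` be a symmetric `n×n` random matrix with zero diagonal and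
independent `N(0, σ_{uw}²)` entries above the diagonal, all `σ_{uw}² ≤ σ_max²`. For a
fixed partition of `{1,…,n}` into `K` classes (given by labels `c : Fin n → Fin K`),
with `Ξ^{(k,l)}` the submatrix with rows in class `k` and columns in class `l`, there
are absolute constants `C₁, C₂, C₃` such that for every `t > 0`, with probability at
least `1 − e^{−t}`, `Σ_{k,l} ‖Ξ^{(k,l)}‖_op² ≤ σ_max² (C₁ n K + C₂ K² log n + C₃ t)`. -/
theorem stmt_2 :
    ∃ C₁ C₂ C₃ : ℝ,
      ∀ (n K : ℕ) (Ω : Type) (_ : MeasurableSpace Ω) (Pr : Measure Ω),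
        IsProbabilityMeasure Pr →
      ∀ (Ξ : Ω → Matrix (Fin n) (Fin n) ℝ) (var : Fin n → Fin n → NNReal) (σmax : ℝ),
        (∀ ω, (Ξ ω).IsSymm) →
        (∀ ω u, Ξ ω u u = 0) →
        (∀ u w : Fin n, u < w →
          Measure.map (fun ω => Ξ ω u w) Pr = gaussianReal 0 (var u w)) →
        iIndepFun
          (fun (p : {p : Fin n × Fin n // p.1 < p.2}) => fun ω => Ξ ω p.1.1 p.1.2) Pr →
        (∀ u w : Fin n, (var u w : ℝ) ≤ σmax ^ 2) →
        ∀ c : Fin n → Fin K,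
        ∀ t : ℝ, 0 < t →
          Pr {ω | ∑ k : Fin K, ∑ l : Fin K,
                (opNormM ((Ξ ω).submatrix
                  (fun u : {u : Fin n // c u = k} => (u : Fin n))
                  (fun u : {u : Fin n // c u = l} => (u : Fin n)))) ^ 2
              ≤ σmax ^ 2 * (C₁ * n * K + C₂ * (K : ℝ) ^ 2 * Real.log n + C₃ * t)}
            ≥ 1 - ENNReal.ofReal (Real.exp (-t)) := by
  classical
  refine ⟨1000, 1000, 1000, ?_⟩
  intro n K Ω mΩ Pr hPr Ξ var σmax hsym hdiag hmap hind hvar c t ht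
  haveI := hPr
  set B : ℝ := σmax ^ 2 * (1000 * n * K + 1000 * (K:ℝ)^2 * Real.log n + 1000 * t) with hB
  set E : Set Ω := {ω | ∑ k : Fin K, ∑ l : Fin K,
      (opNormM ((Ξ ω).submatrix
        (fun u : {u : Fin n // c u = k} => (u : Fin n))
        (fun u : {u : Fin n // c u = l} => (u : Fin n)))) ^ 2 ≤ B} with hE
  suffices h : Pr Eᶜ ≤ ENNReal.ofReal (Real.exp (-t)) by
    have h1 : (1:ℝ≥0∞) ≤ Pr E + Pr Eᶜ := by
      have hu : E ∪ Eᶜ = Set.univ := Set.union_compl_self E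
      calc (1:ℝ≥0∞) = Pr (E ∪ Eᶜ) := by rw [hu]; exact measure_univ.symm
        _ ≤ Pr E + Pr Eᶜ := measure_union_le _ _
    rw [ge_iff_le, tsub_le_iff_right]
    calc (1:ℝ≥0∞) ≤ Pr E + Pr Eᶜ := h1
      _ ≤ Pr E + ENNReal.ofReal (Real.exp (-t)) := add_le_add_right h _
  rcases le_or_gt n 1 with hn1 | hn1
  · -- trivial case n ≤ 1
    have hS0 : ∀ ω, ∑ k : Fin K, ∑ l : Fin K,
        (opNormM ((Ξ ω).submatrix
          (fun u : {u : Fin n // c u = k} => (u : Fin n))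
          (fun u : {u : Fin n // c u = l} => (u : Fin n)))) ^ 2 = 0 := by
      intro ω
      refine Finset.sum_eq_zero fun k _ => Finset.sum_eq_zero fun l _ => ?_
      have hzero : (Ξ ω).submatrix
          (fun u : {u : Fin n // c u = k} => (u : Fin n))
          (fun u : {u : Fin n // c u = l} => (u : Fin n)) = 0 := by
        ext u w
        have huw : (u : Fin n) = (w : Fin n) := by
          apply Fin.ext
          have hu := (u : Fin n).isLt
          have hw := (w : Fin n).isLt
          omega
        rw [Matrix.submatrix_apply, huw]
        rw [hdiag ω (w : Fin n)]
        rfl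
      rw [hzero]
      have hop0 : opNormM (0 : Matrix {u : Fin n // c u = k} {u : Fin n // c u = l} ℝ) = 0 := by
        rw [opNormM, map_zero, map_zero, norm_zero]
      rw [hop0]
      norm_num
    have hlogn : Real.log n = 0 := by
      have hn01 : n = 0 ∨ n = 1 := by omega
      rcases hn01 with h | h <;> rw [h] <;> simp
    have hB0 : 0 ≤ B := by
      rw [hB, hlogn]
      have h1 : (0:ℝ) ≤ 1000 * n * K := by positivity
      nlinarith [sq_nonneg σmax, ht, h1]
    have hEu : E = Set.univ := Set.eq_univ_of_forall fun ω => by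
      rw [hE, Set.mem_setOf_eq, hS0 ω]
      exact hB0
    rw [hEu, Set.compl_univ]
    simp
  · -- main case n ≥ 2
    have hn2 : 2 ≤ n := hn1
    have hK : 0 < K := (c ⟨0, by omega⟩).pos
    obtain ⟨NΛ, hNΛ1, hNΛcard, hNΛnet⟩ := exists_net (Fin K × Fin K)
    choose N hN1 hNcard hNnet using fun k : Fin K => exists_net {u : Fin n // c u = k}
    set LL : ℝ := (K*K : ℕ) * Real.log 36 + (2*(n*K) : ℕ) * Real.log 9 with hLL
    have hLL0 : 0 ≤ LL := by
      rw [hLL]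
      have h36 : (0:ℝ) ≤ Real.log 36 := Real.log_nonneg (by norm_num)
      have h9 : (0:ℝ) ≤ Real.log 9 := Real.log_nonneg (by norm_num)
      positivity
    set τ : ℝ := t + LL with hτdef
    have hτpos : 0 < τ := by rw [hτdef]; linarith
    set s0 : ℝ := 2 * |σmax| * Real.sqrt τ with hs0def
    have hs0 : 0 ≤ s0 := by rw [hs0def]; positivity
    have hs0sq : s0^2 = 4 * σmax^2 * τ := by
      rw [hs0def, mul_pow, mul_pow, sq_abs, Real.sq_sqrt hτpos.le]
      ring
    -- numeric bound
    have hnum : 9 * s0^2 ≤ B := by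
      have hcastKK : ((K*K : ℕ) : ℝ) = (K:ℝ)^2 := by push_cast; ring
      have hcast2nK : ((2*(n*K) : ℕ) : ℝ) = 2*(n:ℝ)*(K:ℝ) := by push_cast; ring
      have hlog2 : (0.6931471803:ℝ) < Real.log 2 := Real.log_two_gt_d9
      have hlogn2 : Real.log 2 ≤ Real.log n := by
        apply Real.log_le_log (by norm_num)
        exact_mod_cast hn2
      have hK1 : (1:ℝ) ≤ (K:ℝ) := by exact_mod_cast hK
      have hn0 : (2:ℝ) ≤ (n:ℝ) := by exact_mod_cast hn2
      have hKsq : (0:ℝ) ≤ (K:ℝ)^2 := sq_nonneg _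
      have hin : 36 * τ ≤ 1000 * n * K + 1000 * (K:ℝ)^2 * Real.log n + 1000 * t := by
        rw [hτdef, hLL, hcastKK, hcast2nK]
        have hnK0 : (0:ℝ) ≤ (n:ℝ)*(K:ℝ) :=
          mul_nonneg (by linarith : (0:ℝ) ≤ (n:ℝ)) (by linarith : (0:ℝ) ≤ (K:ℝ))
        have e1 : 36 * ((K:ℝ)^2 * Real.log 36) ≤ 144 * (K:ℝ)^2 := by
          calc 36 * ((K:ℝ)^2 * Real.log 36) = (36*(K:ℝ)^2) * Real.log 36 := by ring
            _ ≤ (36*(K:ℝ)^2) * 4 :=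
                mul_le_mul_of_nonneg_left log36_le (by positivity)
            _ = 144 * (K:ℝ)^2 := by ring
        have e2 : 36 * (2*(n:ℝ)*(K:ℝ) * Real.log 9) ≤ 216 * ((n:ℝ)*(K:ℝ)) := by
          calc 36 * (2*(n:ℝ)*(K:ℝ) * Real.log 9) = (72*((n:ℝ)*(K:ℝ))) * Real.log 9 := by ring
            _ ≤ (72*((n:ℝ)*(K:ℝ))) * 3 :=
                mul_le_mul_of_nonneg_left log9_le (by positivity)
            _ = 216 * ((n:ℝ)*(K:ℝ)) := by ring
        have e3 : 144 * (K:ℝ)^2 ≤ 1000 * (K:ℝ)^2 * Real.log n := by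
          have h1 : (0.6931471803:ℝ) ≤ Real.log n := le_trans hlog2.le hlogn2
          calc 144 * (K:ℝ)^2 = (K:ℝ)^2 * 144 := by ring
            _ ≤ (K:ℝ)^2 * (1000 * Real.log n) := by
                refine mul_le_mul_of_nonneg_left ?_ hKsq
                linarith
            _ = 1000 * (K:ℝ)^2 * Real.log n := by ring
        have e4 : 216 * ((n:ℝ)*(K:ℝ)) ≤ 1000 * (n:ℝ) * (K:ℝ) := by
          calc 216 * ((n:ℝ)*(K:ℝ)) ≤ 1000 * ((n:ℝ)*(K:ℝ)) := by linarith
            _ = 1000 * (n:ℝ) * (K:ℝ) := by ring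
        linarith [e1, e2, e3, e4]
      calc 9 * s0^2 = σmax^2 * (36 * τ) := by rw [hs0sq]; ring
        _ ≤ σmax^2 * (1000 * n * K + 1000 * (K:ℝ)^2 * Real.log n + 1000 * t) :=
            mul_le_mul_of_nonneg_left hin (sq_nonneg _)
        _ = B := by rw [hB]
    -- event inclusion
    have hsubset : Eᶜ ⊆ ⋃ j ∈ JJ c NΛ N, {ω | s0 < ∑ p : {p : Fin n × Fin n // p.1 < p.2},
        weightW c j p * Ξ ω p.1.1 p.1.2} := by
      intro ω hω
      simp only [Set.mem_compl_iff, hE, Set.mem_setOf_eq, not_le] at hω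
      by_contra hcon
      simp only [Set.mem_iUnion, Set.mem_setOf_eq, not_exists, not_lt] at hcon
      have hGle : ∀ j ∈ JJ c NΛ N, GMdef c j (Ξ ω) ≤ s0 := by
        intro j hj
        rw [GM_eq_pairsum c j (Ξ ω) (hsym ω) (fun u => hdiag ω u)]
        exact hcon j hj
      have hdb := det_bound c NΛ hNΛnet N hN1 hNnet (Ξ ω) s0 hs0 hGle
      exact absurd (le_trans hdb hnum) (not_le.2 hω)
    -- probability bound
    have htail : ∀ j ∈ JJ c NΛ N,
        Pr {ω | s0 < ∑ p : {p : Fin n × Fin n // p.1 < p.2},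
          weightW c j p * Ξ ω p.1.1 p.1.2} ≤ ENNReal.ofReal (Real.exp (-τ)) := by
      intro j hj
      obtain ⟨hj1, hj2⟩ := mem_JJ_props c NΛ N hNΛ1 hN1 j hj
      exact gaussian_weighted_tail Pr
        (fun (p : {p : Fin n × Fin n // p.1 < p.2}) ω => Ξ ω p.1.1 p.1.2)
        (fun p => var p.1.1 p.1.2)
        (fun p => hmap p.1.1 p.1.2 p.2) hind (σmax^2) (sq_nonneg σmax)
        (fun p => hvar _ _) (weightW c j) (weight_sq_le c j hj1 hj2)
        τ s0 hτpos (by rw [hs0sq]) hs0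
    have hcardR : ((JJ c NΛ N).card : ℝ) ≤ Real.exp LL := by
      have hc := card_JJ c NΛ N hNΛcard hNcard
      calc ((JJ c NΛ N).card : ℝ) ≤ ((36 ^ (K*K) * 9 ^ (2*(n*K)) : ℕ) : ℝ) := by
            exact_mod_cast hc
        _ = (36:ℝ)^(K*K) * (9:ℝ)^(2*(n*K)) := by push_cast; ring
        _ = Real.exp LL := by
            rw [hLL, ← Real.exp_log (by norm_num : (0:ℝ) < 36),
              ← Real.exp_log (by norm_num : (0:ℝ) < 9),
              ← Real.exp_nat_mul, ← Real.exp_nat_mul, ← Real.exp_add]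
            congr 1
            rw [Real.log_exp, Real.log_exp]
    calc Pr Eᶜ ≤ Pr (⋃ j ∈ JJ c NΛ N, {ω | s0 < ∑ p : {p : Fin n × Fin n // p.1 < p.2},
          weightW c j p * Ξ ω p.1.1 p.1.2}) := measure_mono hsubset
      _ ≤ ∑ j ∈ JJ c NΛ N, Pr {ω | s0 < ∑ p : {p : Fin n × Fin n // p.1 < p.2},
          weightW c j p * Ξ ω p.1.1 p.1.2} := measure_biUnion_finset_le _ _
      _ ≤ ∑ _j ∈ JJ c NΛ N, ENNReal.ofReal (Real.exp (-τ)) := Finset.sum_le_sum htail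
      _ = ((JJ c NΛ N).card : ℝ≥0∞) * ENNReal.ofReal (Real.exp (-τ)) := by
          rw [Finset.sum_const, nsmul_eq_mul]
      _ ≤ ENNReal.ofReal (Real.exp (-t)) := by
          rw [← ENNReal.ofReal_natCast ((JJ c NΛ N).card),
            ← ENNReal.ofReal_mul (by positivity)]
          apply ENNReal.ofReal_le_ofReal
          calc ((JJ c NΛ N).card : ℝ) * Real.exp (-τ)
              ≤ Real.exp LL * Real.exp (-τ) :=
                mul_le_mul_of_nonneg_right hcardR (Real.exp_pos _).le
            _ = Real.exp (LL - τ) := by rw [← Real.exp_add]; ring_nf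
            _ = Real.exp (-t) := by rw [hτdef]; ring_nf
end

section
/- Let F₁ and F₂ be cumulative distribution functions of real random variables, at least one of which is continuous (atomless), and let F_{1,2} = F₁ * F₂ denote the cumulative distribution function of the sum of two independent random variables with respective CDFs F₁ and F₂. Define H(x,y) = F_{1,2}(F₁^{-1}(x) + F₂^{-1}(y)) for x, y ∈ (0,1), where F^{-1} denotes the generalized inverse (quantile function). Then H is nondecreasing in each argument, and for independent random variables Ψ_u, Ψ_v each uniformly distributed on (0,1), H(Ψ_u, Ψ_v) is uniformly distributed on (0,1); that is, H is an H-function with positive association. -/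
open MeasureTheory ProbabilityTheory

/-- The uniform distribution on the interval `(0,1)`. -/
noncomputable def unifOI : Measure ℝ := volume.restrict (Set.Ioo (0:ℝ) 1)

/-- The cumulative distribution function of a measure on `ℝ`. -/
noncomputable def cdfOf (μ : Measure ℝ) (x : ℝ) : ℝ := (μ (Set.Iic x)).toReal

/-- The quantile function (generalized inverse CDF) of a measure on `ℝ`:
`F⁻¹(p) = inf {x : p ≤ F(x)}`. -/
noncomputable def quantile (μ : Measure ℝ) (p : ℝ) : ℝ := sInf {x : ℝ | p ≤ cdfOf μ x}

section Aux
variable (μ : Measure ℝ) [IsProbabilityMeasure μ]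

lemma cdfOf_eq (x : ℝ) : cdfOf μ x = cdf μ x := (cdf_eq_real μ x).symm

instance : IsProbabilityMeasure unifOI := ⟨by simp [unifOI]⟩

lemma quantile_set_nonempty {p : ℝ} (hp : p < 1) : {x : ℝ | p ≤ cdfOf μ x}.Nonempty := by
  obtain ⟨x, hx⟩ := ((tendsto_cdf_atTop μ).eventually (eventually_ge_nhds hp)).exists
  exact ⟨x, by rw [Set.mem_setOf_eq, cdfOf_eq]; exact hx⟩

lemma quantile_set_bddBelow {p : ℝ} (hp : 0 < p) : BddBelow {x : ℝ | p ≤ cdfOf μ x} := by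
  obtain ⟨x₀, hx₀⟩ := ((tendsto_cdf_atBot μ).eventually (eventually_lt_nhds hp)).exists
  refine ⟨x₀, fun x hx => ?_⟩
  by_contra h
  push_neg at h
  rw [Set.mem_setOf_eq, cdfOf_eq] at hx
  exact absurd (hx.trans (monotone_cdf μ h.le)) (not_le.mpr hx₀)

lemma quantile_le_iff {p x : ℝ} (hp0 : 0 < p) (hp1 : p < 1) :
    quantile μ p ≤ x ↔ p ≤ cdfOf μ x := by
  constructor
  · intro h
    set c := quantile μ p with hc
    have hkey : ∀ y, c < y → p ≤ cdf μ y := by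
      intro y hy
      obtain ⟨s, hs, hsy⟩ := (csInf_lt_iff (quantile_set_bddBelow μ hp0)
        (quantile_set_nonempty μ hp1)).mp hy
      rw [Set.mem_setOf_eq, cdfOf_eq] at hs
      exact hs.trans (monotone_cdf μ hsy.le)
    have hcc : p ≤ cdf μ c := by
      have ht : Filter.Tendsto (cdf μ) (nhdsWithin c (Set.Ioi c)) (nhds (cdf μ c)) :=
        ((cdf μ).right_continuous c).mono_left (nhdsWithin_mono _ Set.Ioi_subset_Ici_self)
      refine ge_of_tendsto ht ?_
      filter_upwards [self_mem_nhdsWithin] with y hy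
      exact hkey y hy
    rw [cdfOf_eq]
    exact hcc.trans (monotone_cdf μ h)
  · intro h
    exact csInf_le (quantile_set_bddBelow μ hp0) h

lemma quantile_monotoneOn : MonotoneOn (quantile μ) (Set.Ioo 0 1) := by
  intro p hp q hq hpq
  exact csInf_le_csInf (quantile_set_bddBelow μ hp.1) (quantile_set_nonempty μ hq.2)
    (fun x hx => le_trans hpq hx)

lemma aemeasurable_quantile : AEMeasurable (quantile μ) unifOI := by
  unfold unifOI
  exact aemeasurable_restrict_of_monotoneOn measurableSet_Ioo (quantile_monotoneOn μ)

lemma unifOI_Iic {c : ℝ} (h0 : 0 ≤ c) (h1 : c ≤ 1) :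
    unifOI (Set.Iic c) = ENNReal.ofReal c := by
  rw [unifOI, Measure.restrict_apply measurableSet_Iic]
  rcases eq_or_lt_of_le h1 with h | h
  · have : Set.Iic c ∩ Set.Ioo (0:ℝ) 1 = Set.Ioo (0:ℝ) 1 := by
      ext p
      simp only [Set.mem_inter_iff, Set.mem_Iic, Set.mem_Ioo, and_iff_right_iff_imp]
      intro hp
      rw [h]
      exact hp.2.le
    rw [this, Real.volume_Ioo, h]
    norm_num
  · have : Set.Iic c ∩ Set.Ioo (0:ℝ) 1 = Set.Ioc (0:ℝ) c := by
      ext p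
      simp only [Set.mem_inter_iff, Set.mem_Iic, Set.mem_Ioo, Set.mem_Ioc]
      constructor
      · rintro ⟨h1, h2, _⟩; exact ⟨h2, h1⟩
      · rintro ⟨h1, h2⟩; exact ⟨h2, h1, lt_of_le_of_lt h2 h⟩
    rw [this, Real.volume_Ioc, sub_zero]

lemma map_quantile : Measure.map (quantile μ) unifOI = μ := by
  haveI : IsProbabilityMeasure (Measure.map (quantile μ) unifOI) :=
    Measure.isProbabilityMeasure_map (aemeasurable_quantile μ)
  refine Measure.ext_of_Iic _ _ (fun x => ?_)
  rw [Measure.map_apply_of_aemeasurable (aemeasurable_quantile μ) measurableSet_Iic]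
  rw [show unifOI = volume.restrict (Set.Ioo (0:ℝ) 1) from rfl,
    Measure.restrict_apply' measurableSet_Ioo]
  have hset : quantile μ ⁻¹' Set.Iic x ∩ Set.Ioo 0 1
      = Set.Iic (cdfOf μ x) ∩ Set.Ioo 0 1 := by
    ext p
    simp only [Set.mem_inter_iff, Set.mem_preimage, Set.mem_Iic, Set.mem_Ioo]
    constructor
    · rintro ⟨h1, h2⟩
      exact ⟨(quantile_le_iff μ h2.1 h2.2).mp h1, h2⟩
    · rintro ⟨h1, h2⟩
      exact ⟨(quantile_le_iff μ h2.1 h2.2).mpr h1, h2⟩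
  rw [hset, ← Measure.restrict_apply' measurableSet_Ioo,
    show volume.restrict (Set.Ioo (0:ℝ) 1) = unifOI from rfl,
    unifOI_Iic (by rw [cdfOf_eq]; exact cdf_nonneg μ x) (by rw [cdfOf_eq]; exact cdf_le_one μ x),
    cdfOf_eq, ofReal_cdf]

lemma map_cdf_eq (hν : ∀ x : ℝ, μ {x} = 0) : Measure.map (cdf μ) μ = unifOI := by
  have hF : Measurable (cdf μ) := (monotone_cdf μ).measurable
  haveI : IsProbabilityMeasure (Measure.map (cdf μ) μ) :=
    Measure.isProbabilityMeasure_map hF.aemeasurable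
  refine Measure.ext_of_Iic _ _ (fun t => ?_)
  rw [Measure.map_apply hF measurableSet_Iic]
  by_cases ht1 : 1 ≤ t
  · have hA : (cdf μ) ⁻¹' Set.Iic t = Set.univ :=
      Set.eq_univ_of_forall (fun z => (cdf_le_one μ z).trans ht1)
    have hU : unifOI (Set.Iic t) = 1 := by
      rw [unifOI, Measure.restrict_apply measurableSet_Iic]
      have : Set.Iic t ∩ Set.Ioo (0:ℝ) 1 = Set.Ioo (0:ℝ) 1 := by
        ext p
        simp only [Set.mem_inter_iff, Set.mem_Iic, Set.mem_Ioo, and_iff_right_iff_imp]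
        exact fun hp => hp.2.le.trans ht1
      rw [this, Real.volume_Ioo]
      norm_num
    rw [hA, hU]
    simp
  push_neg at ht1
  by_cases ht0 : t < 0
  · have hA : (cdf μ) ⁻¹' Set.Iic t = ∅ := by
      ext z
      simp only [Set.mem_preimage, Set.mem_Iic, Set.mem_empty_iff_false, iff_false, not_le]
      exact lt_of_lt_of_le ht0 (cdf_nonneg μ z)
    have hU : unifOI (Set.Iic t) = 0 := by
      rw [unifOI, Measure.restrict_apply measurableSet_Iic]
      have : Set.Iic t ∩ Set.Ioo (0:ℝ) 1 = ∅ := by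
        ext p
        simp only [Set.mem_inter_iff, Set.mem_Iic, Set.mem_Ioo, Set.mem_empty_iff_false,
          iff_false, not_and]
        intro h1 h2
        exact absurd (h1.trans_lt ht0) (not_lt.mpr h2.le)
      rw [this]
      simp
    rw [hA, hU]
    simp
  push_neg at ht0
  by_cases hA : {z : ℝ | cdf μ z ≤ t}.Nonempty
  · have hbdd : BddAbove {z : ℝ | cdf μ z ≤ t} := by
      obtain ⟨x₁, hx₁⟩ := ((tendsto_cdf_atTop μ).eventually (eventually_gt_nhds ht1)).exists
      refine ⟨x₁, fun z hz => ?_⟩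
      by_contra h
      push_neg at h
      exact absurd ((monotone_cdf μ h.le).trans hz) (not_le.mpr hx₁)
    set c := sSup {z : ℝ | cdf μ z ≤ t} with hc
    have hcont : cdf μ c = Function.leftLim (cdf μ) c := by
      have h1 := StieltjesFunction.measure_singleton (cdf μ) c
      rw [measure_cdf μ, hν c] at h1
      have h2 : cdf μ c - Function.leftLim (cdf μ) c ≤ 0 :=
        ENNReal.ofReal_eq_zero.mp h1.symm
      have h3 : Function.leftLim (cdf μ) c ≤ cdf μ c := (monotone_cdf μ).leftLim_le le_rfl
      linarith
    have hcA : cdf μ c ≤ t := by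
      rw [hcont]
      refine le_of_tendsto ((monotone_cdf μ).tendsto_leftLim c) ?_
      filter_upwards [self_mem_nhdsWithin] with z hz
      obtain ⟨a, haA, hza⟩ := exists_lt_of_lt_csSup hA hz
      exact (monotone_cdf μ hza.le).trans haA
    have hAeq : (cdf μ) ⁻¹' Set.Iic t = Set.Iic c := by
      ext z
      simp only [Set.mem_preimage, Set.mem_Iic]
      constructor
      · intro hz
        exact le_csSup hbdd hz
      · intro hz
        exact (monotone_cdf μ hz).trans hcA
    have hct : t ≤ cdf μ c := by
      have ht2 : Filter.Tendsto (cdf μ) (nhdsWithin c (Set.Ioi c)) (nhds (cdf μ c)) :=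
        ((cdf μ).right_continuous c).mono_left (nhdsWithin_mono _ Set.Ioi_subset_Ici_self)
      refine ge_of_tendsto ht2 ?_
      filter_upwards [self_mem_nhdsWithin] with z hz
      by_contra h
      push_neg at h
      exact absurd (le_csSup hbdd h.le) (not_le.mpr hz)
    rw [hAeq, ← ofReal_cdf μ c, le_antisymm hcA hct, unifOI_Iic ht0 ht1.le]
  · have ht : t ≤ 0 := by
      by_contra h
      push_neg at h
      obtain ⟨x₀, hx₀⟩ := ((tendsto_cdf_atBot μ).eventually (eventually_lt_nhds h)).exists
      exact hA ⟨x₀, hx₀.le⟩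
    have ht' : t = 0 := le_antisymm ht ht0
    have hAe : (cdf μ) ⁻¹' Set.Iic t = ∅ := by
      ext z
      simp only [Set.mem_preimage, Set.mem_Iic, Set.mem_empty_iff_false, iff_false, not_le]
      by_contra h
      push_neg at h
      exact hA ⟨z, h⟩
    rw [hAe, ht', unifOI_Iic le_rfl zero_le_one]
    simp

lemma cdfOf_mono : Monotone (cdfOf μ) := by
  intro a b h
  rw [cdfOf_eq, cdfOf_eq]
  exact monotone_cdf μ h

end Aux

lemma conv_atomless (μ₁ μ₂ : Measure ℝ) [IsProbabilityMeasure μ₁] [IsProbabilityMeasure μ₂]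
    (hcont : (∀ x : ℝ, μ₁ {x} = 0) ∨ (∀ x : ℝ, μ₂ {x} = 0)) (x : ℝ) :
    (μ₁.conv μ₂) {x} = 0 := by
  rw [Measure.conv, Measure.map_apply measurable_add (measurableSet_singleton x)]
  rcases hcont with h | h
  · rw [Measure.prod_apply_symm (measurable_add (measurableSet_singleton x))]
    have hset : ∀ b : ℝ, (fun a : ℝ => (a, b)) ⁻¹' ((fun p : ℝ × ℝ => p.1 + p.2) ⁻¹' {x})
        = {x - b} := by
      intro b
      ext a
      simp only [Set.mem_preimage, Set.mem_singleton_iff]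
      constructor
      · intro hh; linarith
      · intro hh; linarith
    simp only [hset, h]
    simp
  · rw [Measure.prod_apply (measurable_add (measurableSet_singleton x))]
    have hset : ∀ a : ℝ, Prod.mk a ⁻¹' ((fun p : ℝ × ℝ => p.1 + p.2) ⁻¹' {x}) = {x - a} := by
      intro a
      ext b
      simp only [Set.mem_preimage, Set.mem_singleton_iff]
      constructor
      · intro hh; linarith
      · intro hh; linarith
    simp only [hset, h]
    simp


/-- Let `F₁, F₂` be the CDFs of probability measures `μ₁, μ₂` on `ℝ`,
at least one of which is atomless, and let `F_{1,2}` be the CDF of the convolution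
`μ₁ ∗ μ₂` (the law of the sum of independent random variables with these CDFs).
Then `H(x,y) = F_{1,2}(F₁⁻¹(x) + F₂⁻¹(y))` is nondecreasing in each argument on `(0,1)`,
and for independent random variables `Ψu, Ψv` each uniform on `(0,1)`,
`H (Ψu, Ψv)` is uniformly distributed on `(0,1)`: `H` is an H-function with
positive association. -/
theorem stmt_5 (μ₁ μ₂ : Measure ℝ) [IsProbabilityMeasure μ₁] [IsProbabilityMeasure μ₂]
    (hcont : (∀ x : ℝ, μ₁ {x} = 0) ∨ (∀ x : ℝ, μ₂ {x} = 0)) :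
    (∀ y ∈ Set.Ioo (0:ℝ) 1, MonotoneOn
        (fun x => cdfOf (μ₁.conv μ₂) (quantile μ₁ x + quantile μ₂ y)) (Set.Ioo (0:ℝ) 1)) ∧
    (∀ x ∈ Set.Ioo (0:ℝ) 1, MonotoneOn
        (fun y => cdfOf (μ₁.conv μ₂) (quantile μ₁ x + quantile μ₂ y)) (Set.Ioo (0:ℝ) 1)) ∧
    (∀ (Ω : Type) (_ : MeasurableSpace Ω) (Pr : Measure Ω), IsProbabilityMeasure Pr →
      ∀ Ψu Ψv : Ω → ℝ, Measurable Ψu → Measurable Ψv → IndepFun Ψu Ψv Pr →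
        Measure.map Ψu Pr = unifOI → Measure.map Ψv Pr = unifOI →
        Measure.map
          (fun ω => cdfOf (μ₁.conv μ₂) (quantile μ₁ (Ψu ω) + quantile μ₂ (Ψv ω))) Pr
          = unifOI) := by
  haveI hconvP : IsProbabilityMeasure (μ₁.conv μ₂) := by
    rw [Measure.conv]
    exact Measure.isProbabilityMeasure_map measurable_add.aemeasurable
  refine ⟨?_, ?_, ?_⟩
  · intro y _ a ha b hb hab
    exact cdfOf_mono (μ₁.conv μ₂)
      (add_le_add_left (quantile_monotoneOn μ₁ ha hb hab) _)
  · intro x _ a ha b hb hab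
    exact cdfOf_mono (μ₁.conv μ₂)
      (add_le_add_right (quantile_monotoneOn μ₂ ha hb hab) _)
  · intro Ω mΩ Pr hPr Ψu Ψv hΨu hΨv hindep hmapu hmapv
    haveI := hPr
    have hq₁ : AEMeasurable (quantile μ₁) (Measure.map Ψu Pr) := by
      rw [hmapu]; exact aemeasurable_quantile μ₁
    have hq₂ : AEMeasurable (quantile μ₂) (Measure.map Ψv Pr) := by
      rw [hmapv]; exact aemeasurable_quantile μ₂
    set g₁ := hq₁.mk (quantile μ₁) with hg₁def
    set g₂ := hq₂.mk (quantile μ₂) with hg₂def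
    have hg₁ : Measurable g₁ := hq₁.measurable_mk
    have hg₂ : Measurable g₂ := hq₂.measurable_mk
    have he₁ : ∀ᵐ ω ∂Pr, quantile μ₁ (Ψu ω) = g₁ (Ψu ω) :=
      ae_of_ae_map hΨu.aemeasurable hq₁.ae_eq_mk
    have he₂ : ∀ᵐ ω ∂Pr, quantile μ₂ (Ψv ω) = g₂ (Ψv ω) :=
      ae_of_ae_map hΨv.aemeasurable hq₂.ae_eq_mk
    have hX : Measure.map (g₁ ∘ Ψu) Pr = μ₁ := by
      rw [← Measure.map_map hg₁ hΨu, ← Measure.map_congr hq₁.ae_eq_mk, hmapu, map_quantile]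
    have hY : Measure.map (g₂ ∘ Ψv) Pr = μ₂ := by
      rw [← Measure.map_map hg₂ hΨv, ← Measure.map_congr hq₂.ae_eq_mk, hmapv, map_quantile]
    have hXY : IndepFun (g₁ ∘ Ψu) (g₂ ∘ Ψv) Pr := hindep.comp hg₁ hg₂
    have hZmeas : Measurable (fun ω => g₁ (Ψu ω) + g₂ (Ψv ω)) :=
      (hg₁.comp hΨu).add (hg₂.comp hΨv)
    have hZ : Measure.map (fun ω => g₁ (Ψu ω) + g₂ (Ψv ω)) Pr = μ₁.conv μ₂ := by
      have hprod := (indepFun_iff_map_prod_eq_prod_map_map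
        (hg₁.comp hΨu).aemeasurable (hg₂.comp hΨv).aemeasurable).mp hXY
      rw [Measure.conv, ← hX, ← hY, ← hprod,
        Measure.map_map measurable_add ((hg₁.comp hΨu).prodMk (hg₂.comp hΨv))]
      rfl
    have hν : ∀ x : ℝ, (μ₁.conv μ₂) {x} = 0 := conv_atomless μ₁ μ₂ hcont
    have hFmeas : Measurable (cdf (μ₁.conv μ₂)) := (monotone_cdf _).measurable
    have hmain : Measure.map (fun ω => cdf (μ₁.conv μ₂) (g₁ (Ψu ω) + g₂ (Ψv ω))) Pr
        = unifOI := by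
      rw [show (fun ω => cdf (μ₁.conv μ₂) (g₁ (Ψu ω) + g₂ (Ψv ω)))
          = (cdf (μ₁.conv μ₂)) ∘ (fun ω => g₁ (Ψu ω) + g₂ (Ψv ω)) from rfl,
        ← Measure.map_map hFmeas hZmeas, hZ, map_cdf_eq _ hν]
    rw [← hmain]
    apply Measure.map_congr
    filter_upwards [he₁, he₂] with ω h1 h2
    rw [cdfOf_eq, h1, h2]
end

section
/- Let h : (0,1)² → (0,1) be a measurable function such that h(Ψ_u, Ψ_v) is uniformly distributed on (0,1) whenever Ψ_u, Ψ_v are independent uniforms on (0,1). Let Ψ_u, Ψ_v, η be independent random variables each uniformly distributed on (0,1), and let σ ≥ 0. Then the random variable H(Ψ_u, Ψ_v, η) = Φ₁( (1/√(1+σ²)) Φ₁^{-1}(h(Ψ_u, Ψ_v)) + (σ/√(1+σ²)) Φ₁^{-1}(η) ) is uniformly distributed on (0,1); that is, H is a 3-dimensional H-function. -/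
open MeasureTheory ProbabilityTheory

/-- `gaussCDF v x = Φ_{v}(x)`, the CDF of the centered Gaussian with variance `v`. -/
noncomputable def gaussCDF (v : NNReal) (x : ℝ) : ℝ := ((gaussianReal 0 v) (Set.Iic x)).toReal

/-- The (generalized) inverse CDF of the centered Gaussian with variance `v`. -/
noncomputable def gaussCDFInv (v : NNReal) (p : ℝ) : ℝ := sInf {x : ℝ | p ≤ gaussCDF v x}

/-- `h : (0,1)² → (0,1)` outputs a uniform random variable whenever its two inputs are
independent uniform random variables on `(0,1)`. -/
def UniformOutput (h : ℝ → ℝ → ℝ) : Prop :=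
  ∀ (Ω : Type) (_ : MeasurableSpace Ω) (Pr : Measure Ω), IsProbabilityMeasure Pr →
    ∀ X Y : Ω → ℝ, Measurable X → Measurable Y → IndepFun X Y Pr →
      Measure.map X Pr = unifOI → Measure.map Y Pr = unifOI →
      Measure.map (fun ω => h (X ω) (Y ω)) Pr = unifOI

section Aux

open Set Filter

local notation "γ" => gaussianReal 0 1

instance inst_s11 : IsProbabilityMeasure unifOI :=
  ⟨by rw [unifOI, Measure.restrict_apply_univ, Real.volume_Ioo]; norm_num⟩

lemma gr_ne_zero {s : Set ℝ} (hs : MeasurableSet s) (h : volume s ≠ 0) : γ s ≠ 0 := by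
  rw [gaussianReal_of_var_ne_zero 0 one_ne_zero]
  rw [Ne, withDensity_apply_eq_zero (measurable_gaussianPDF 0 1)]
  have : {x : ℝ | gaussianPDF 0 1 x ≠ 0} ∩ s = s := by
    ext x
    simp [(gaussianPDF_pos 0 one_ne_zero x).ne']
  rw [this]
  exact h

lemma gcdf_strictMono : StrictMono (gaussCDF 1) := by
  intro x y hxy
  have hunion : γ (Set.Iic y) = γ (Set.Iic x) + γ (Set.Ioc x y) := by
    rw [← measure_union (Set.Iic_disjoint_Ioc le_rfl) measurableSet_Ioc,
      Set.Iic_union_Ioc_eq_Iic hxy.le]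
  have hpos : 0 < (γ (Set.Ioc x y)).toReal := by
    refine ENNReal.toReal_pos (gr_ne_zero measurableSet_Ioc ?_) (measure_ne_top _ _)
    rw [Real.volume_Ioc]
    simpa [sub_pos] using hxy
  have := ENNReal.toReal_add (measure_ne_top γ (Set.Iic x)) (measure_ne_top γ (Set.Ioc x y))
  rw [gaussCDF, gaussCDF, hunion, this]
  linarith

lemma gcdf_pos (x : ℝ) : 0 < gaussCDF 1 x := by
  refine ENNReal.toReal_pos (gr_ne_zero measurableSet_Iic ?_) (measure_ne_top _ _)
  rw [Real.volume_Iic]; exact ENNReal.top_ne_zero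

lemma gcdf_lt_one (x : ℝ) : gaussCDF 1 x < 1 := by
  have hunion : γ Set.univ = γ (Set.Iic x) + γ (Set.Ioi x) := by
    rw [← measure_union (Set.Iic_disjoint_Ioi le_rfl) measurableSet_Ioi, Set.Iic_union_Ioi]
  have hpos : 0 < (γ (Set.Ioi x)).toReal := by
    refine ENNReal.toReal_pos (gr_ne_zero measurableSet_Ioi ?_) (measure_ne_top _ _)
    rw [Real.volume_Ioi]; exact ENNReal.top_ne_zero
  have h1 : (γ Set.univ).toReal = 1 := by simp
  have := ENNReal.toReal_add (measure_ne_top γ (Set.Iic x)) (measure_ne_top γ (Set.Ioi x))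
  rw [hunion, this] at h1
  rw [gaussCDF]
  linarith

end Aux

section Aux2
open Set Filter
local notation "γ" => gaussianReal 0 1

lemma gaussianPDF_le_one (x : ℝ) : gaussianPDF 0 1 x ≤ 1 := by
  rw [gaussianPDF]
  refine ENNReal.ofReal_le_one.2 ?_
  rw [gaussianPDFReal_def]
  have hpi : (1:ℝ) ≤ 2 * Real.pi * (1:NNReal) := by
    push_cast
    nlinarith [Real.pi_gt_three]
  have h1 : (Real.sqrt (2 * Real.pi * (1:NNReal)))⁻¹ ≤ 1 := by
    rw [inv_le_one_iff₀]
    right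
    exact Real.one_le_sqrt.2 hpi
  have h2 : Real.exp (-(x - 0) ^ 2 / (2 * (1:NNReal))) ≤ 1 := by
    rw [Real.exp_le_one_iff]
    push_cast
    nlinarith [sq_nonneg (x-0)]
  calc (Real.sqrt (2 * Real.pi * (1:NNReal)))⁻¹ * Real.exp (-(x - 0) ^ 2 / (2 * (1:NNReal)))
      ≤ 1 * 1 := by
        refine mul_le_mul h1 h2 (Real.exp_nonneg _) zero_le_one
    _ = 1 := by norm_num

lemma gcdf_sub_le {x y : ℝ} (hxy : x ≤ y) : gaussCDF 1 y - gaussCDF 1 x ≤ y - x := by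
  have hunion : γ (Set.Iic y) = γ (Set.Iic x) + γ (Set.Ioc x y) := by
    rw [← measure_union (Set.Iic_disjoint_Ioc le_rfl) measurableSet_Ioc,
      Set.Iic_union_Ioc_eq_Iic hxy]
  have hle : γ (Set.Ioc x y) ≤ volume (Set.Ioc x y) := by
    rw [gaussianReal_of_var_ne_zero 0 one_ne_zero,
      withDensity_apply _ measurableSet_Ioc]
    calc ∫⁻ a in Set.Ioc x y, gaussianPDF 0 1 a ≤ ∫⁻ _ in Set.Ioc x y, 1 :=
          lintegral_mono fun a => gaussianPDF_le_one a
      _ = volume (Set.Ioc x y) := by simp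
  have h2 : (γ (Set.Ioc x y)).toReal ≤ y - x := by
    have := ENNReal.toReal_mono (by rw [Real.volume_Ioc]; exact ENNReal.ofReal_ne_top) hle
    rwa [Real.volume_Ioc, ENNReal.toReal_ofReal (by linarith)] at this
  have := ENNReal.toReal_add (measure_ne_top γ (Set.Iic x)) (measure_ne_top γ (Set.Ioc x y))
  rw [gaussCDF, gaussCDF, hunion, this]
  linarith

lemma gcdf_continuous : Continuous (gaussCDF 1) := by
  refine (LipschitzWith.of_dist_le_mul (K := 1) fun x y => ?_).continuous
  rw [Real.dist_eq, Real.dist_eq, NNReal.coe_one, one_mul]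
  rcases le_total x y with hxy | hxy
  · rw [abs_sub_comm, abs_of_nonneg (sub_nonneg.2 ((gcdf_strictMono.monotone hxy))),
      abs_sub_comm, abs_of_nonneg (sub_nonneg.2 hxy)]
    exact gcdf_sub_le hxy
  · rw [abs_of_nonneg (sub_nonneg.2 ((gcdf_strictMono.monotone hxy))),
      abs_of_nonneg (sub_nonneg.2 hxy)]
    exact gcdf_sub_le hxy

lemma gcdf_surj {p : ℝ} (hp0 : 0 < p) (hp1 : p < 1) : ∃ x, gaussCDF 1 x = p := by
  have hcdf : gaussCDF 1 = fun x => cdf γ x := by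
    funext x; rw [gaussCDF, cdf_eq_real, measureReal_def]
  have hbot : ∀ᶠ x in atBot, gaussCDF 1 x < p := by
    rw [hcdf]
    exact (tendsto_cdf_atBot γ).eventually_lt_const hp0
  have htop : ∀ᶠ x in atTop, p < gaussCDF 1 x := by
    rw [hcdf]
    exact (tendsto_cdf_atTop γ).eventually_const_lt hp1
  obtain ⟨a, ha⟩ := hbot.exists
  obtain ⟨b, hb⟩ := htop.exists
  have hab : a ≤ b := by
    by_contra hc
    push_neg at hc
    exact absurd (gcdf_strictMono.monotone hc.le) (by linarith)
  have := intermediate_value_Icc hab gcdf_continuous.continuousOn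
  obtain ⟨x, _, hx⟩ := this ⟨ha.le, hb.le⟩
  exact ⟨x, hx⟩

end Aux2

section Aux3
open Set Filter
local notation "γ" => gaussianReal 0 1

lemma ginv_eq {p x₀ : ℝ} (h : gaussCDF 1 x₀ = p) : gaussCDFInv 1 p = x₀ := by
  have hset : {x : ℝ | p ≤ gaussCDF 1 x} = Set.Ici x₀ := by
    ext x
    simp only [Set.mem_setOf_eq, Set.mem_Ici, ← h]
    exact ⟨fun hx => gcdf_strictMono.le_iff_le.1 hx, fun hx => gcdf_strictMono.monotone hx⟩
  rw [gaussCDFInv, hset, csInf_Ici]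

lemma ginv_le_iff {p : ℝ} (hp0 : 0 < p) (hp1 : p < 1) (t : ℝ) :
    gaussCDFInv 1 p ≤ t ↔ p ≤ gaussCDF 1 t := by
  obtain ⟨x₀, hx₀⟩ := gcdf_surj hp0 hp1
  rw [ginv_eq hx₀, ← hx₀]
  exact gcdf_strictMono.le_iff_le.symm

lemma ginv_nonpos {p : ℝ} (hp : p ≤ 0) : gaussCDFInv 1 p = 0 := by
  have hset : {x : ℝ | p ≤ gaussCDF 1 x} = Set.univ := by
    ext x
    simp only [Set.mem_setOf_eq, Set.mem_univ, iff_true]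
    exact hp.trans (gcdf_pos x).le
  rw [gaussCDFInv, hset]
  refine Real.sInf_of_not_bddBelow ?_
  rintro ⟨c, hc⟩
  exact absurd (hc (Set.mem_univ (c - 1))) (by norm_num)

lemma ginv_ge_one {p : ℝ} (hp : 1 ≤ p) : gaussCDFInv 1 p = 0 := by
  have hset : {x : ℝ | p ≤ gaussCDF 1 x} = ∅ := by
    ext x
    simp only [Set.mem_setOf_eq, Set.mem_empty_iff_false, iff_false, not_le]
    exact (gcdf_lt_one x).trans_le hp
  rw [gaussCDFInv, hset, Real.sInf_empty]

lemma ginv_measurable : Measurable (gaussCDFInv 1) := by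
  refine measurable_of_Iic fun c => ?_
  have hkey : gaussCDFInv 1 ⁻¹' Set.Iic c =
      if 0 ≤ c then Set.Iic (gaussCDF 1 c) ∪ Set.Ici 1 else Set.Ioc 0 (gaussCDF 1 c) := by
    ext p
    simp only [Set.mem_preimage, Set.mem_Iic]
    by_cases hp0 : p ≤ 0
    · rw [ginv_nonpos hp0]
      split_ifs with hc
      · simp only [hc, true_iff, Set.mem_union, Set.mem_Iic, Set.mem_Ici]
        exact Or.inl (hp0.trans (gcdf_pos c).le)
      · push_neg at hc
        simp only [iff_false_intro (not_le.2 hc), Set.mem_Ioc, false_iff, not_and, not_le]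
        intro hlt
        exact absurd hlt (not_lt.2 hp0)
    · push_neg at hp0
      by_cases hp1 : 1 ≤ p
      · rw [ginv_ge_one hp1]
        split_ifs with hc
        · simp only [hc, true_iff, Set.mem_union, Set.mem_Ici]
          exact Or.inr hp1
        · push_neg at hc
          simp only [iff_false_intro (not_le.2 hc), Set.mem_Ioc, false_iff, not_and, not_le]
          exact fun _ => lt_of_lt_of_le (gcdf_lt_one c) hp1
      · push_neg at hp1
        rw [ginv_le_iff hp0 hp1]
        split_ifs with hc
        · simp only [Set.mem_union, Set.mem_Iic, Set.mem_Ici]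
          constructor
          · exact fun hx => Or.inl hx
          · rintro (hx | hx)
            · exact hx
            · exact absurd hx (not_le.2 hp1)
        · simp only [Set.mem_Ioc]
          exact ⟨fun hx => ⟨hp0, hx⟩, fun hx => hx.2⟩
  rw [hkey]
  split_ifs
  · exact (measurableSet_Iic.union measurableSet_Ici)
  · exact measurableSet_Ioc

lemma ofReal_gcdf (x : ℝ) : ENNReal.ofReal (gaussCDF 1 x) = γ (Set.Iic x) :=
  ENNReal.ofReal_toReal (measure_ne_top _ _)

lemma map_ginv : Measure.map (gaussCDFInv 1) unifOI = γ := by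
  haveI : IsProbabilityMeasure (Measure.map (gaussCDFInv 1) unifOI) :=
    Measure.isProbabilityMeasure_map ginv_measurable.aemeasurable
  refine Measure.ext_of_Iic _ _ fun t => ?_
  rw [Measure.map_apply ginv_measurable measurableSet_Iic, unifOI,
    Measure.restrict_apply (ginv_measurable measurableSet_Iic)]
  have hset : gaussCDFInv 1 ⁻¹' Set.Iic t ∩ Set.Ioo 0 1 = Set.Ioc 0 (gaussCDF 1 t) := by
    ext p
    simp only [Set.mem_inter_iff, Set.mem_preimage, Set.mem_Iic, Set.mem_Ioo, Set.mem_Ioc]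
    constructor
    · rintro ⟨hle, h0, h1⟩
      exact ⟨h0, (ginv_le_iff h0 h1 t).1 hle⟩
    · rintro ⟨h0, hle⟩
      have h1 : p < 1 := lt_of_le_of_lt hle (gcdf_lt_one t)
      exact ⟨(ginv_le_iff h0 h1 t).2 hle, h0, h1⟩
  rw [hset, Real.volume_Ioc, ← ofReal_gcdf]
  norm_num

lemma map_gcdf : Measure.map (gaussCDF 1) γ = unifOI := by
  haveI : IsProbabilityMeasure (Measure.map (gaussCDF 1) γ) :=
    Measure.isProbabilityMeasure_map gcdf_continuous.measurable.aemeasurable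
  refine Measure.ext_of_Iic _ _ fun t => ?_
  rw [Measure.map_apply gcdf_continuous.measurable measurableSet_Iic, unifOI,
    Measure.restrict_apply measurableSet_Iic]
  rcases le_or_gt t 0 with ht0 | ht0
  · have h1 : gaussCDF 1 ⁻¹' Set.Iic t = ∅ := by
      ext x
      simp only [Set.mem_preimage, Set.mem_Iic, Set.mem_empty_iff_false, iff_false, not_le]
      exact lt_of_le_of_lt ht0 (gcdf_pos x)
    have h2 : Set.Iic t ∩ Set.Ioo (0:ℝ) 1 = ∅ := by
      ext p
      simp only [Set.mem_inter_iff, Set.mem_Iic, Set.mem_Ioo, Set.mem_empty_iff_false, iff_false,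
        not_and]
      intro hp h0
      linarith
    rw [h1, h2]
    simp
  · rcases lt_or_ge t 1 with ht1 | ht1
    · obtain ⟨x₀, hx₀⟩ := gcdf_surj ht0 ht1
      have h1 : gaussCDF 1 ⁻¹' Set.Iic t = Set.Iic x₀ := by
        ext x
        simp only [Set.mem_preimage, Set.mem_Iic, ← hx₀]
        exact gcdf_strictMono.le_iff_le
      have h2 : Set.Iic t ∩ Set.Ioo (0:ℝ) 1 = Set.Ioc 0 t := by
        ext p
        simp only [Set.mem_inter_iff, Set.mem_Iic, Set.mem_Ioo, Set.mem_Ioc]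
        constructor
        · rintro ⟨hp, h0, _⟩; exact ⟨h0, hp⟩
        · rintro ⟨h0, hp⟩; exact ⟨hp, h0, lt_of_le_of_lt hp ht1⟩
      rw [h1, h2, Real.volume_Ioc, ← ofReal_gcdf, hx₀]
      norm_num
    · have h1 : gaussCDF 1 ⁻¹' Set.Iic t = Set.univ := by
        ext x
        simp only [Set.mem_preimage, Set.mem_Iic, Set.mem_univ, iff_true]
        exact (gcdf_lt_one x).le.trans ht1
      have h2 : Set.Iic t ∩ Set.Ioo (0:ℝ) 1 = Set.Ioo 0 1 := by
        ext p
        simp only [Set.mem_inter_iff, Set.mem_Iic, Set.mem_Ioo]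
        exact ⟨fun hx => hx.2, fun hx => ⟨hx.2.le.trans ht1, hx⟩⟩
      rw [h1, h2, Real.volume_Ioo]
      simp
end Aux3

section Aux4
open Set Filter

lemma map_withDensity' {α β : Type*} [MeasurableSpace α] [MeasurableSpace β] (μ : Measure α)
    {e : α → β} (he : Measurable e) {g : β → ENNReal} (hg : Measurable g) :
    Measure.map e (μ.withDensity fun x => g (e x)) = (Measure.map e μ).withDensity g := by
  ext s hs
  rw [Measure.map_apply he hs, withDensity_apply _ hs, withDensity_apply _ (he hs),
    setLIntegral_map hs hg he]

lemma prod_gauss : (gaussianReal 0 1).prod (gaussianReal 0 1) =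
    (volume.prod volume).withDensity fun p : ℝ × ℝ => gaussianPDF 0 1 p.1 * gaussianPDF 0 1 p.2 := by
  refine Measure.prod_eq fun s t hs ht => ?_
  rw [withDensity_apply _ (hs.prod ht), ← Measure.prod_restrict,
    lintegral_prod (fun p : ℝ × ℝ => gaussianPDF 0 1 p.1 * gaussianPDF 0 1 p.2)
      (((measurable_gaussianPDF 0 1).comp measurable_fst).mul
      ((measurable_gaussianPDF 0 1).comp measurable_snd)).aemeasurable]
  simp only
  have hinner : ∀ x : ℝ, ∫⁻ y in t, gaussianPDF 0 1 x * gaussianPDF 0 1 y =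
      gaussianPDF 0 1 x * ∫⁻ y in t, gaussianPDF 0 1 y :=
    fun x => lintegral_const_mul _ (measurable_gaussianPDF 0 1)
  rw [lintegral_congr hinner, lintegral_mul_const _ (measurable_gaussianPDF 0 1)]
  have hga : ∀ u : Set ℝ, MeasurableSet u → gaussianReal 0 1 u = ∫⁻ y in u, gaussianPDF 0 1 y := by
    intro u hu
    rw [gaussianReal_of_var_ne_zero 0 one_ne_zero, withDensity_apply _ hu]
  rw [hga s hs, hga t ht]

lemma map_rot {a b : ℝ} (hab : a ^ 2 + b ^ 2 = 1) :
    Measure.map (fun p : ℝ × ℝ => a * p.1 + b * p.2)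
      ((gaussianReal 0 1).prod (gaussianReal 0 1)) = gaussianReal 0 1 := by
  set R : ℝ × ℝ →ₗ[ℝ] ℝ × ℝ :=
    Matrix.toLin (Module.Basis.finTwoProd ℝ) (Module.Basis.finTwoProd ℝ) !![a, b; -b, a] with hR
  have hdet : LinearMap.det R = 1 := by
    rw [hR, LinearMap.det_toLin, Matrix.det_fin_two_of]
    linear_combination hab
  have hRm : Measurable R := R.continuous_of_finiteDimensional.measurable
  have hRapp : ∀ p : ℝ × ℝ, R p = (a * p.1 + b * p.2, -b * p.1 + a * p.2) := fun p => by
    rw [hR]; exact Matrix.toLin_finTwoProd_apply a b (-b) a p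
  have hRvol : Measure.map R (volume : Measure (ℝ × ℝ)) = volume := by
    rw [Measure.map_linearMap_addHaar_eq_smul_addHaar volume (by rw [hdet]; exact one_ne_zero),
      hdet]
    simp
  have hDm : Measurable (fun p : ℝ × ℝ => gaussianPDF 0 1 p.1 * gaussianPDF 0 1 p.2) :=
    ((measurable_gaussianPDF 0 1).comp measurable_fst).mul
      ((measurable_gaussianPDF 0 1).comp measurable_snd)
  have hDR : (fun p : ℝ × ℝ => gaussianPDF 0 1 (R p).1 * gaussianPDF 0 1 (R p).2) =
      (fun p : ℝ × ℝ => gaussianPDF 0 1 p.1 * gaussianPDF 0 1 p.2) := by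
    funext p
    obtain ⟨x, y⟩ := p
    rw [hRapp]
    simp only [gaussianPDF]
    rw [← ENNReal.ofReal_mul (gaussianPDFReal_nonneg 0 1 _), ← ENNReal.ofReal_mul
      (gaussianPDFReal_nonneg 0 1 _)]
    congr 1
    simp only [gaussianPDFReal_def, NNReal.coe_one, mul_one, sub_zero]
    have key : -(a * x + b * y) ^ 2 / 2 + -(-b * x + a * y) ^ 2 / 2 =
        -x ^ 2 / 2 + -y ^ 2 / 2 := by
      linear_combination (-(x ^ 2 + y ^ 2) / 2) * hab
    rw [mul_mul_mul_comm, ← Real.exp_add, key, Real.exp_add]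
    ring
  have h1 := map_withDensity' (μ := (volume : Measure (ℝ × ℝ))) hRm hDm
  rw [hDR, hRvol] at h1
  have hinv : Measure.map R ((gaussianReal 0 1).prod (gaussianReal 0 1)) =
      (gaussianReal 0 1).prod (gaussianReal 0 1) := by
    rw [prod_gauss, ← Measure.volume_eq_prod, h1]
  have hcomp : (fun p : ℝ × ℝ => a * p.1 + b * p.2) = Prod.fst ∘ R := by
    funext p
    simp [hRapp p]
  rw [hcomp, ← Measure.map_map measurable_fst hRm, hinv, Measure.map_fst_prod]
  simp

end Aux4

/-- If `h(Ψu,Ψv)` is uniform for independent uniforms, and `Ψu, Ψv, η`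
are independent uniform random variables on `(0,1)` and `σ ≥ 0`, then
`H(Ψu,Ψv,η) = Φ₁((1/√(1+σ²)) Φ₁⁻¹(h(Ψu,Ψv)) + (σ/√(1+σ²)) Φ₁⁻¹(η))`
is uniformly distributed on `(0,1)`; that is, `H` is a 3-dimensional H-function. -/
theorem stmt_11 (h : ℝ → ℝ → ℝ)
    (hhmeas : Measurable (fun p : ℝ × ℝ => h p.1 p.2))
    (hh : UniformOutput h)
    {Ω : Type} [MeasurableSpace Ω] (Pr : Measure Ω) [IsProbabilityMeasure Pr]
    (Ψu Ψv η : Ω → ℝ)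
    (hΨu : Measurable Ψu) (hΨv : Measurable Ψv) (hη : Measurable η)
    (hIndep : iIndepFun ![Ψu, Ψv, η] Pr)
    (hu : Measure.map Ψu Pr = unifOI) (hv : Measure.map Ψv Pr = unifOI)
    (hη' : Measure.map η Pr = unifOI)
    (σ : ℝ) (hσ : 0 ≤ σ) :
    Measure.map (fun ω =>
        gaussCDF 1 ((1 / Real.sqrt (1 + σ ^ 2)) * gaussCDFInv 1 (h (Ψu ω) (Ψv ω))
          + (σ / Real.sqrt (1 + σ ^ 2)) * gaussCDFInv 1 (η ω))) Pr = unifOI := by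
  set a : ℝ := 1 / Real.sqrt (1 + σ ^ 2) with ha
  set b : ℝ := σ / Real.sqrt (1 + σ ^ 2) with hb
  have hsq : (Real.sqrt (1 + σ ^ 2)) ^ 2 = 1 + σ ^ 2 := Real.sq_sqrt (by positivity)
  have hspos : 0 < Real.sqrt (1 + σ ^ 2) := Real.sqrt_pos.2 (by positivity)
  have hab : a ^ 2 + b ^ 2 = 1 := by
    rw [ha, hb, div_pow, div_pow, hsq]
    field_simp
  -- the three coordinates are measurable
  have hfm : ∀ i, Measurable (![Ψu, Ψv, η] i) := by
    intro i
    fin_cases i <;> simpa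
  -- Z = h(Ψu, Ψv)
  set Z : Ω → ℝ := fun ω => h (Ψu ω) (Ψv ω) with hZ
  have hZm : Measurable Z := hhmeas.comp (hΨu.prodMk hΨv)
  have hUV : IndepFun Ψu Ψv Pr := by
    have := hIndep.indepFun (i := 0) (j := 1) (by decide)
    simpa using this
  have hZlaw : Measure.map Z Pr = unifOI :=
    hh Ω _ Pr inferInstance Ψu Ψv hΨu hΨv hUV hu hv
  have hZη : IndepFun Z η Pr := by
    have h1 := hIndep.indepFun_prodMk hfm 0 1 2 (by decide) (by decide)
    have h2 := h1.comp hhmeas measurable_id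
    simp at h2
    exact h2
  -- X, Y standard normals
  set X : Ω → ℝ := fun ω => gaussCDFInv 1 (Z ω) with hX
  set Y : Ω → ℝ := fun ω => gaussCDFInv 1 (η ω) with hY
  have hXm : Measurable X := ginv_measurable.comp hZm
  have hYm : Measurable Y := ginv_measurable.comp hη
  have hXlaw : Measure.map X Pr = gaussianReal 0 1 := by
    have : Measure.map X Pr = Measure.map (gaussCDFInv 1) (Measure.map Z Pr) := by
      rw [Measure.map_map ginv_measurable hZm]
      rfl
    rw [this, hZlaw, map_ginv]
  have hYlaw : Measure.map Y Pr = gaussianReal 0 1 := by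
    have : Measure.map Y Pr = Measure.map (gaussCDFInv 1) (Measure.map η Pr) := by
      rw [Measure.map_map ginv_measurable hη]
      rfl
    rw [this, hη', map_ginv]
  have hXY : IndepFun X Y Pr := hZη.comp ginv_measurable ginv_measurable
  have hjoint : Measure.map (fun ω => (X ω, Y ω)) Pr =
      (gaussianReal 0 1).prod (gaussianReal 0 1) := by
    rw [(indepFun_iff_map_prod_eq_prod_map_map hXm.aemeasurable hYm.aemeasurable).1 hXY,
      hXlaw, hYlaw]
  have hTm : Measurable (fun p : ℝ × ℝ => a * p.1 + b * p.2) :=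
    (measurable_fst.const_mul a).add (measurable_snd.const_mul b)
  have hstep : Measure.map (fun ω => gaussCDF 1 (a * X ω + b * Y ω)) Pr =
      Measure.map (gaussCDF 1) (Measure.map (fun p : ℝ × ℝ => a * p.1 + b * p.2)
        (Measure.map (fun ω => (X ω, Y ω)) Pr)) := by
    rw [Measure.map_map hTm (hXm.prodMk hYm),
      Measure.map_map gcdf_continuous.measurable (hTm.comp (hXm.prodMk hYm))]
    rfl
  calc Measure.map (fun ω => gaussCDF 1 (a * X ω + b * Y ω)) Pr
      = Measure.map (gaussCDF 1) (Measure.map (fun p : ℝ × ℝ => a * p.1 + b * p.2)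
        (Measure.map (fun ω => (X ω, Y ω)) Pr)) := hstep
    _ = unifOI := by rw [hjoint, map_rot hab, map_gcdf]
end
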